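/- arXiv:1909.07555 — 4 statements merged into one kernel-verified Lean document; each statement's English description precedes it below -/
import Mathlib

section
/- Let (G, H) be a complex unit gain graph whose underlying simple graph G is connected. Then for every proper subset V₀ of the vertex set such that G − V₀ is acyclic (a forest), 2m(G − V₀) ≤ rank(H); and rank(H) ≤ 2m(G) + b(G), where b(G) is the minimum cardinality |S| over subsets S of the vertex set such that G − S is bipartite. -/
/-- `(G, H)` is a complex unit gain graph: `H` is Hermitian, entries of adjacent pairs
have modulus `1`, and entries of non-adjacent pairs (including the diagonal) vanish. -/
def IsUnitGain {V : Type*} (G : SimpleGraph V) (H : Matrix V V ℂ) : Prop :=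
  H.IsHermitian ∧ (∀ i j, G.Adj i j → ‖H i j‖ = 1) ∧
    ∀ i j, ¬ G.Adj i j → H i j = 0

/-- The matching number of a simple graph: the maximum size of a matching. -/
noncomputable def matchNum {V : Type*} (G : SimpleGraph V) : ℕ :=
  sSup {n : ℕ | ∃ M : G.Subgraph, M.IsMatching ∧ M.edgeSet.ncard = n}

/-- The cyclomatic number `c(G) = |E(G)| - |V| + ω(G)` of a simple graph. -/
noncomputable def cycNum {V : Type*} (G : SimpleGraph V) : ℤ :=
  (G.edgeSet.ncard : ℤ) - (Nat.card V : ℤ) + (Nat.card G.ConnectedComponent : ℤ)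

/-- The gain of a walk: the product of the matrix entries along its darts. -/
noncomputable def gain {V : Type*} {G : SimpleGraph V} (H : Matrix V V ℂ) {u v : V}
    (w : G.Walk u v) : ℂ :=
  (w.darts.map fun d => H d.toProd.1 d.toProd.2).prod

/-- The set of vertices of `G` lying on some cycle. -/
def cycVerts {V : Type*} (G : SimpleGraph V) : Set V :=
  {u | ∃ (x : V) (w : G.Walk x x), w.IsCycle ∧ u ∈ w.support}

/-- `u` and `v` lie on a common cycle of `G`. -/
def cycleRel {V : Type*} (G : SimpleGraph V) (u v : V) : Prop :=
  ∃ (x : V) (w : G.Walk x x), w.IsCycle ∧ u ∈ w.support ∧ v ∈ w.support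

/-- The setoid generated by "lying on a common cycle". -/
def contractSetoid {V : Type*} (G : SimpleGraph V) : Setoid V :=
  Relation.EqvGen.setoid (cycleRel G)

/-- `T_G`: the graph obtained from `G` by contracting each cycle into a single vertex. -/
def TG {V : Type*} (G : SimpleGraph V) : SimpleGraph (Quotient (contractSetoid G)) where
  Adj a b := a ≠ b ∧ ∃ u v : V, Quotient.mk (contractSetoid G) u = a ∧
      Quotient.mk (contractSetoid G) v = b ∧ G.Adj u v
  symm := ⟨fun a b ⟨hne, u, v, hu, hv, hadj⟩ => ⟨hne.symm, v, u, hv, hu, hadj.symm⟩⟩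
  loopless := ⟨fun a ⟨hne, _⟩ => hne rfl⟩

/-- The rank of the principal submatrix of `H` indexed by a set `s` of vertices. -/
noncomputable def rankOn {V : Type*} [Fintype V] (H : Matrix V V ℂ) (s : Set V) : ℕ :=
  letI : Fintype s := (Set.toFinite s).fintype
  (H.submatrix (Subtype.val : s → V) (Subtype.val : s → V)).rank

/-- The cycles of `G` are pairwise vertex-disjoint: any two cycles sharing a
vertex have the same edges. -/
def cyclesDisjoint {V : Type*} (G : SimpleGraph V) : Prop :=
  ∀ ⦃x y : V⦄ (c₁ : G.Walk x x) (c₂ : G.Walk y y), c₁.IsCycle → c₂.IsCycle →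
    (∃ u, u ∈ c₁.support ∧ u ∈ c₂.support) → ∀ e, e ∈ c₁.edges ↔ e ∈ c₂.edges

/-- `b(G)`: the minimum cardinality of a set `S` of vertices such that `G - S` is
bipartite (i.e. `2`-colorable). -/
noncomputable def bipNum {V : Type*} (G : SimpleGraph V) : ℕ :=
  sInf {n : ℕ | ∃ S : Set V, S.ncard = n ∧ (G.induce Sᶜ).Colorable 2}


section AuxLA
open Function Matrix Equiv Module

open Matrix Module
open scoped ComplexOrder

section RankLemmas
variable {m n p W X : Type*}

/-- rank of a submatrix (arbitrary index maps) is at most the rank. -/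
lemma rank_submatrix_le'' [Fintype m] [Fintype n] [Fintype W] [Fintype X]
    [DecidableEq m] [DecidableEq n]
    (A : Matrix m n ℂ) (f : W → m) (g : X → n) :
    (A.submatrix f g).rank ≤ A.rank := by
  have h1 : A.submatrix f g = (1 : Matrix m m ℂ).submatrix f id *
      (A * (1 : Matrix n n ℂ).submatrix id g) := by
    have e1 : A.submatrix f g = ((1 : Matrix m m ℂ) * A).submatrix f g := by rw [Matrix.one_mul]
    rw [e1, Matrix.submatrix_mul _ _ _ id _ Function.bijective_id]
    have e2 : A.submatrix id g = (A * (1 : Matrix n n ℂ)).submatrix id g := by rw [Matrix.mul_one]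
    rw [e2, Matrix.submatrix_mul _ _ _ id _ Function.bijective_id,
      Matrix.submatrix_id_id]
  rw [h1]
  exact (Matrix.rank_mul_le_right _ _).trans
    ((Matrix.rank_mul_le_left _ _).trans le_rfl)

lemma rank_submatrix_equiv' [Fintype m] [Fintype n] [Fintype W] [Fintype X]
    [DecidableEq m] [DecidableEq n] [DecidableEq W] [DecidableEq X]
    (A : Matrix m n ℂ) (e₁ : W ≃ m) (e₂ : X ≃ n) :
    (A.submatrix e₁ e₂).rank = A.rank := by
  refine le_antisymm (rank_submatrix_le'' A e₁ e₂) ?_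
  have : A = (A.submatrix e₁ e₂).submatrix e₁.symm e₂.symm := by
    rw [Matrix.submatrix_submatrix]
    ext i j
    simp
  conv_lhs => rw [this]
  exact rank_submatrix_le'' _ _ _

lemma rank_add_le' [Fintype n] (A B : Matrix m n ℂ) :
    (A + B).rank ≤ A.rank + B.rank := by
  classical
  rw [Matrix.rank, Matrix.rank, Matrix.rank, Matrix.mulVecLin_add]
  have hsub : LinearMap.range (A.mulVecLin + B.mulVecLin) ≤
      LinearMap.range A.mulVecLin ⊔ LinearMap.range B.mulVecLin := by
    rintro x ⟨y, rfl⟩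
    exact Submodule.add_mem_sup (LinearMap.mem_range_self _ y) (LinearMap.mem_range_self _ y)
  calc finrank ℂ (LinearMap.range (A.mulVecLin + B.mulVecLin))
      ≤ finrank ℂ ↥(LinearMap.range A.mulVecLin ⊔ LinearMap.range B.mulVecLin) :=
        Submodule.finrank_mono hsub
    _ ≤ _ := Submodule.finrank_add_le_finrank_add_finrank _ _

/-- a square matrix over ℂ with full rank is a unit -/
lemma isUnit_of_rank_eq_card [Fintype p] [DecidableEq p] (D : Matrix p p ℂ)
    (h : D.rank = Fintype.card p) : IsUnit D := by
  rw [← Matrix.mulVec_injective_iff_isUnit]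
  have hr : LinearMap.range D.mulVecLin = ⊤ := by
    apply Submodule.eq_top_of_finrank_eq
    rw [← Matrix.rank, h, finrank_pi]
  have hsurj : Function.Surjective D.mulVecLin := LinearMap.range_eq_top.mp hr
  exact LinearMap.injective_iff_surjective.mpr hsurj

/-- from a unit matrix, a permutation with nonzero entries -/
lemma exists_perm_of_isUnit [Fintype p] [DecidableEq p] {D : Matrix p p ℂ}
    (h : IsUnit D) : ∃ σ : Equiv.Perm p, ∀ i, D (σ i) i ≠ 0 := by
  by_contra hc
  push_neg at hc
  have hdet : D.det = 0 := by
    rw [Matrix.det_apply]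
    refine Finset.sum_eq_zero fun σ _ => ?_
    obtain ⟨i, hi⟩ := hc σ
    have : ∏ j : p, D (σ j) j = 0 := Finset.prod_eq_zero (Finset.mem_univ i) hi
    rw [this, smul_zero]
  rw [Matrix.isUnit_iff_isUnit_det, hdet] at h
  exact (not_isUnit_zero h : False)

lemma exists_cols_rank_eq [Fintype m] [Fintype n] (A : Matrix m n ℂ) :
    ∃ J : Finset n, J.card = A.rank ∧
      (A.submatrix id (fun j : {x // x ∈ J} => (j : n))).rank = A.rank := by
  classical
  obtain ⟨b, hbsub, hbspan, hbind⟩ := exists_linearIndependent ℂ (Set.range Aᵀ)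
  have hbfin : b.Finite := (Set.finite_range Aᵀ).subset hbsub
  haveI : Fintype b := hbfin.fintype
  have hch : ∀ x : b, ∃ j : n, Aᵀ j = (x : m → ℂ) := fun x => hbsub x.2
  choose ψ hψ using hch
  have hψinj : Function.Injective ψ := by
    intro x y hxy
    apply Subtype.ext
    rw [← hψ x, ← hψ y, hxy]
  refine ⟨Finset.univ.image ψ, ?_, ?_⟩
  · rw [Finset.card_image_of_injective _ hψinj, Finset.card_univ]
    rw [A.rank_eq_finrank_span_cols]
    change _ = finrank ℂ (Submodule.span ℂ (Set.range Aᵀ))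
    rw [← hbspan, finrank_span_set_eq_card hbind,
      Set.toFinset_card]
  · have hr : Set.range (A.submatrix id fun j : {x // x ∈ Finset.univ.image ψ} => (j : n))ᵀ
        = b := by
      have heq : (A.submatrix id fun j : {x // x ∈ Finset.univ.image ψ} => (j : n))ᵀ
          = fun j : {x // x ∈ Finset.univ.image ψ} => Aᵀ (j : n) := rfl
      rw [heq]
      ext v
      constructor
      · rintro ⟨⟨j, hj⟩, rfl⟩
        simp only [Finset.mem_image, Finset.mem_univ, true_and] at hj
        obtain ⟨x, rfl⟩ := hj
        show Aᵀ (ψ x) ∈ b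
        rw [hψ x]; exact x.2
      · intro hv
        refine ⟨⟨ψ ⟨v, hv⟩, Finset.mem_image_of_mem _ (Finset.mem_univ _)⟩, ?_⟩
        exact hψ ⟨v, hv⟩
    rw [Matrix.rank_eq_finrank_span_cols]
    change finrank ℂ (Submodule.span ℂ (Set.range
      (A.submatrix id fun j : {x // x ∈ Finset.univ.image ψ} => (j : n))ᵀ)) = _
    rw [hr, A.rank_eq_finrank_span_cols]
    change _ = finrank ℂ (Submodule.span ℂ (Set.range Aᵀ))
    rw [← hbspan]

lemma exists_invertible_submatrix [Fintype m] [Fintype n] (A : Matrix m n ℂ) :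
    ∃ (f : Fin A.rank → m) (g : Fin A.rank → n), Function.Injective f ∧
      Function.Injective g ∧ IsUnit (A.submatrix f g) := by
  classical
  obtain ⟨J, hJcard, hJrank⟩ := exists_cols_rank_eq A
  set A₂ := A.submatrix id (fun j : {x // x ∈ J} => (j : n)) with hA₂
  obtain ⟨I, hIcard, hIrank⟩ := exists_cols_rank_eq A₂ᴴ
  rw [Matrix.rank_conjTranspose, hJrank] at hIcard hIrank
  have key : (A₂ᴴ.submatrix id (fun i : {x // x ∈ I} => (i : m)))
      = (A₂.submatrix (fun i : {x // x ∈ I} => (i : m)) id)ᴴ :=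
    (Matrix.conjTranspose_submatrix A₂ _ id).symm
  rw [key, Matrix.rank_conjTranspose] at hIrank
  set C := A₂.submatrix (fun i : {x // x ∈ I} => (i : m)) id with hC
  have hCrank : C.rank = A.rank := hIrank
  let eI : {x // x ∈ I} ≃ Fin A.rank := Finset.equivFinOfCardEq hIcard
  let eJ : {x // x ∈ J} ≃ Fin A.rank := Finset.equivFinOfCardEq hJcard
  refine ⟨(fun i : {x // x ∈ I} => (i : m)) ∘ eI.symm,
    (fun j : {x // x ∈ J} => (j : n)) ∘ eJ.symm,
    Subtype.coe_injective.comp eI.symm.injective,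
    Subtype.coe_injective.comp eJ.symm.injective, ?_⟩
  have hsub : A.submatrix ((fun i : {x // x ∈ I} => (i : m)) ∘ eI.symm)
      ((fun j : {x // x ∈ J} => (j : n)) ∘ eJ.symm) = C.submatrix eI.symm eJ.symm := by
    rw [hC, hA₂, Matrix.submatrix_submatrix, Matrix.submatrix_submatrix]
    rfl
  rw [hsub]
  apply isUnit_of_rank_eq_card
  rw [rank_submatrix_equiv' C eI.symm eJ.symm, hCrank, Fintype.card_fin]

end RankLemmas

end AuxLA

section AuxPerm
open Function Matrix Equiv Module

variable {β : Type*}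

/-- representative set for a fixed-point-free involution -/
lemma exists_rep_finset [DecidableEq β] (σ : Equiv.Perm β)
    (h2 : ∀ i, σ (σ i) = i) :
    ∀ s : Finset β, (∀ i ∈ s, σ i ∈ s) → (∀ i ∈ s, σ i ≠ i) →
      ∃ R : Finset β, R ∪ R.image σ = s ∧ ∀ r ∈ R, σ r ∉ R := by
  intro s
  induction s using Finset.strongInduction with
  | H s ih =>
    intro hinv hfp
    rcases s.eq_empty_or_nonempty with rfl | ⟨a, ha⟩
    · exact ⟨∅, by simp, by simp⟩
    · have hsa : σ a ∈ s := hinv a ha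
      have hane : σ a ≠ a := hfp a ha
      set s' := (s.erase a).erase (σ a) with hs'
      have hs'sub : s' ⊂ s := by
        apply Finset.ssubset_of_subset_of_ssubset
          (Finset.erase_subset _ _)
        exact Finset.erase_ssubset ha
      have hs'mem : ∀ i, i ∈ s' ↔ i ∈ s ∧ i ≠ a ∧ i ≠ σ a := by
        intro i
        simp only [hs', Finset.mem_erase]
        tauto
      have hinv' : ∀ i ∈ s', σ i ∈ s' := by
        intro i hi
        rw [hs'mem] at hi ⊢
        obtain ⟨his, hia, hisa⟩ := hi
        refine ⟨hinv i his, ?_, ?_⟩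
        · intro h; apply hisa; rw [← h, h2]
        · intro h
          exact hia (by have := congrArg σ h; rwa [h2, h2] at this)
      have hfp' : ∀ i ∈ s', σ i ≠ i := fun i hi => hfp i ((hs'mem i).mp hi).1
      obtain ⟨R', hR'u, hR'p⟩ := ih s' hs'sub hinv' hfp'
      refine ⟨insert a R', ?_, ?_⟩
      · rw [Finset.image_insert, Finset.insert_union, Finset.union_insert, hR'u]
        have h1 : insert (σ a) s' = s.erase a := by
          rw [hs']
          exact Finset.insert_erase (by rw [Finset.mem_erase]; exact ⟨hane, hsa⟩)
        rw [h1, Finset.insert_erase ha]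
      · intro r hr
        rcases Finset.mem_insert.mp hr with h' | hrR'
        · subst h'
          intro hmem
          rcases Finset.mem_insert.mp hmem with h | h
          · exact hane h
          · have hmem2 : σ r ∈ R' ∪ R'.image σ := Finset.mem_union_left _ h
            rw [hR'u, hs'mem] at hmem2
            exact hmem2.2.2 rfl
        · intro hmem
          rcases Finset.mem_insert.mp hmem with h | h
          · -- σ r = a, so r = σ a ∈ s' impossible
            have : r ∈ s' := by
              have := hR'u ▸ Finset.mem_union_left (R'.image σ) hrR'
              exact this
            rw [hs'mem] at this
            exact this.2.2 (by rw [← h, h2])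
          · exact hR'p r hrR' h

/-- sign of a fixed-point-free involution on a fintype -/
lemma sign_of_fpf_involution [Fintype β] [DecidableEq β] (σ : Equiv.Perm β)
    (h2 : ∀ i, σ (σ i) = i) (hfp : ∀ i, σ i ≠ i) :
    Equiv.Perm.sign σ = (-1) ^ (Fintype.card β / 2) ∧ 2 ∣ Fintype.card β := by
  have hσ2 : σ * σ = 1 := Equiv.ext fun i => h2 i
  by_cases h1 : σ = 1
  · have : IsEmpty β := by
      by_contra h
      rw [not_isEmpty_iff] at h
      obtain ⟨i⟩ := h
      exact hfp i (by rw [h1]; rfl)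
    rw [h1]
    simp [Fintype.card_eq_zero]
  · have horder : orderOf σ = 2 := by
      apply orderOf_eq_prime
      · rw [pow_two]; exact hσ2
      · exact h1
    have hcyc : ∀ k ∈ σ.cycleType, k = 2 := by
      intro k hk
      have hdvd : k ∣ 2 := horder ▸ (Equiv.Perm.lcm_cycleType σ ▸ Multiset.dvd_lcm hk)
      have h2le : 2 ≤ k := Equiv.Perm.two_le_of_mem_cycleType hk
      exact le_antisymm (Nat.le_of_dvd (by norm_num) hdvd) h2le
    have hrepl : σ.cycleType = Multiset.replicate (Multiset.card σ.cycleType) 2 :=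
      Multiset.eq_replicate_card.mpr hcyc
    have hsupp : σ.support = Finset.univ := by
      ext i; simp [Equiv.Perm.mem_support, hfp i]
    have hsum : σ.cycleType.sum = Fintype.card β := by
      rw [Equiv.Perm.sum_cycleType, hsupp, Finset.card_univ]
    have hcard2 : 2 * Multiset.card σ.cycleType = Fintype.card β := by
      rw [← hsum]
      conv_rhs => rw [hrepl]
      rw [Multiset.sum_replicate, smul_eq_mul, mul_comm]
    constructor
    · rw [Equiv.Perm.sign_of_cycleType, hsum]
      have : Fintype.card β / 2 = Multiset.card σ.cycleType := by omega
      rw [this]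
      have : Fintype.card β + Multiset.card σ.cycleType =
          2 * Multiset.card σ.cycleType + Multiset.card σ.cycleType := by rw [hcard2]
      rw [this]
      rw [pow_add, pow_mul]
      simp
    · exact ⟨_, hcard2.symm⟩

end AuxPerm

section AuxWalk
open Function Matrix Equiv Module

variable {α β : Type*}

/-- walk along the orbit of a permutation whose steps are edges -/
def orbitWalk {F : SimpleGraph α} (g : β → α) (σ : Equiv.Perm β)
    (hadj : ∀ j, F.Adj (g j) (g (σ j))) (i : β) :
    (n : ℕ) → F.Walk (g i) (g (σ^[n] i))
  | 0 => SimpleGraph.Walk.nil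
  | n+1 => ((orbitWalk g σ hadj i n).concat (hadj (σ^[n] i))).copy rfl
      (by rw [Function.iterate_succ_apply'])

lemma orbitWalk_support {F : SimpleGraph α} (g : β → α) (σ : Equiv.Perm β)
    (hadj : ∀ j, F.Adj (g j) (g (σ j))) (i : β) (n : ℕ) :
    (orbitWalk (F := F) g σ hadj i n).support
      = (List.range (n+1)).map (fun k => g (σ^[k] i)) := by
  induction n with
  | zero => rfl
  | succ n ih =>
    rw [orbitWalk, SimpleGraph.Walk.support_copy, SimpleGraph.Walk.support_concat, ih]
    rw [List.range_succ (n := n+1), List.map_append]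
    simp only [List.concat_eq_append, List.map_append, List.map_cons, List.map_nil,
      List.append_assoc, List.nil_append, List.cons_append]
    congr 2
    rw [Function.iterate_succ_apply']

/-- In an acyclic graph, any permutation all of whose steps are edges
(through an injective vertex labelling) is an involution. -/
lemma acyclic_perm_involutive [Fintype β] {F : SimpleGraph α} (hF : F.IsAcyclic)
    (g : β → α) (hg : Function.Injective g) (σ : Equiv.Perm β)
    (hadj : ∀ j, F.Adj (g j) (g (σ j))) : ∀ i, σ (σ i) = i := by
  intro i
  by_contra hss
  have hper : i ∈ periodicPts (⇑σ) := by
    refine ⟨orderOf σ, orderOf_pos σ, ?_⟩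
    show σ^[orderOf σ] i = i
    rw [Equiv.Perm.iterate_eq_pow, pow_orderOf_eq_one]
    rfl
  set l := minimalPeriod (⇑σ) i with hl
  have hl0 : 0 < l := minimalPeriod_pos_of_mem_periodicPts hper
  have hfix : σ^[l] i = i := isPeriodicPt_minimalPeriod (⇑σ) i
  have hne1 : σ i ≠ i := fun h => (hadj i).ne (by rw [h])
  have hl1 : l ≠ 1 := by
    intro h
    apply hne1
    have := hfix
    rw [h] at this
    simpa using this
  have hl2 : l ≠ 2 := by
    intro h
    apply hss
    have := hfix
    rw [h] at this
    simpa [Function.iterate_succ_apply'] using this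
  have hl3 : 3 ≤ l := by omega
  have hinj : Set.InjOn (fun k => σ^[k] i) (Set.Iio l) :=
    iterate_injOn_Iio_minimalPeriod
  -- path 1 : i → σ i → σ² i
  have hp1supp : (orbitWalk (F := F) g σ hadj i 2).support
      = (List.range 3).map (fun k => g (σ^[k] i)) := orbitWalk_support ..
  have hp1 : (orbitWalk (F := F) g σ hadj i 2).IsPath := by
    rw [SimpleGraph.Walk.isPath_def, hp1supp]
    refine List.Nodup.map_on ?_ List.nodup_range
    intro x hx y hy hxy
    rw [List.mem_range] at hx hy
    exact hinj (by simp only [Set.mem_Iio]; omega) (by simp only [Set.mem_Iio]; omega) (hg hxy)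
  -- path 2 : σ² i → σ³ i → ... → σ^l i = i, reversed
  have hback : σ^[l-2] (σ^[2] i) = i := by
    rw [← Function.iterate_add_apply]
    have : l - 2 + 2 = l := by omega
    rw [this, hfix]
  set q := (orbitWalk (F := F) g σ hadj (σ^[2] i) (l-2)).copy rfl
    (congrArg g hback) with hq
  have hqsupp : q.support = (List.range (l-2+1)).map (fun k => g (σ^[k] (σ^[2] i))) := by
    rw [hq, SimpleGraph.Walk.support_copy, orbitWalk_support]
  have hmem_iff : ∀ x, x ∈ q.support ↔
      ∃ k < l - 1, x = g (σ^[k+2] i) := by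
    intro x
    rw [hqsupp]
    simp only [List.mem_map, List.mem_range]
    constructor
    · rintro ⟨k, hk, rfl⟩
      exact ⟨k, by omega, by rw [← Function.iterate_add_apply]⟩
    · rintro ⟨k, hk, rfl⟩
      exact ⟨k, by omega, by rw [← Function.iterate_add_apply]⟩
  have hq_end : ∀ k, k < l - 1 → σ^[k+2] i = σ^[0] i → k + 2 = l := by
    intro k hk hkk
    by_contra hne
    have : k + 2 = 0 := hinj (by simp; omega) (by simp; omega) hkk
    omega
  have hqpath : q.IsPath := by
    rw [SimpleGraph.Walk.isPath_def, hqsupp]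
    refine List.Nodup.map_on ?_ List.nodup_range
    intro x hx y hy hxy
    rw [List.mem_range] at hx hy
    replace hxy : σ^[x+2] i = σ^[y+2] i := by
      rw [Function.iterate_add_apply, Function.iterate_add_apply]
      exact hg hxy
    rcases eq_or_lt_of_le (by omega : x + 2 ≤ l) with hxl | hxl
    · rcases eq_or_lt_of_le (by omega : y + 2 ≤ l) with hyl | hyl
      · omega
      · -- x+2 = l, y+2 < l : σ^[x+2] i = i = σ^[0] i
        have h0 : σ^[y+2] i = σ^[0] i := by
          rw [← hxy, hxl, hfix]
          rfl
        have := hinj (by simpa using hyl) (by simpa using hl0) h0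
        omega
    · rcases eq_or_lt_of_le (by omega : y + 2 ≤ l) with hyl | hyl
      · have h0 : σ^[x+2] i = σ^[0] i := by
          rw [hxy, hyl, hfix]
          rfl
        have := hinj (by simpa using hxl) (by simpa using hl0) h0
        omega
      · have := hinj (by simpa using hxl) (by simpa using hyl) hxy
        omega
  -- the two paths
  let P₁ : F.Path (g i) (g (σ^[2] i)) := ⟨orbitWalk (F := F) g σ hadj i 2, hp1⟩
  let P₂ : F.Path (g i) (g (σ^[2] i)) := ⟨q.reverse, hqpath.reverse⟩
  have hPeq : P₁ = P₂ := SimpleGraph.isAcyclic_iff_path_unique.mp hF P₁ P₂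
  have hmem1 : g (σ i) ∈ (P₁ : F.Walk (g i) (g (σ^[2] i))).support := by
    show g (σ i) ∈ (orbitWalk (F := F) g σ hadj i 2).support
    rw [hp1supp]
    refine List.mem_map.mpr ⟨1, by simp, ?_⟩
    simp
  have hmem2 : g (σ i) ∉ (P₂ : F.Walk (g i) (g (σ^[2] i))).support := by
    show g (σ i) ∉ q.reverse.support
    rw [SimpleGraph.Walk.support_reverse, List.mem_reverse]
    intro hmem
    obtain ⟨k, hk, hkeq⟩ := (hmem_iff _).mp hmem
    have heq : σ^[k+2] i = σ^[1] i := by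
      apply hg
      rw [← hkeq]
      simp
    rcases eq_or_lt_of_le (by omega : k + 2 ≤ l) with hkl | hkl
    · -- σ^[l] i = σ i means i = σ i
      apply hne1
      have : σ^[k+2] i = i := by rw [hkl, hfix]
      rw [this] at heq
      exact (by simpa using heq.symm)
    · have := hinj (by simpa using hkl) (by simp; omega) heq
      omega
  rw [hPeq] at hmem1
  exact hmem2 hmem1

end AuxWalk

section AuxMN
open Function Matrix Equiv Module


variable {α : Type*}

lemma matchNum_bddAbove [Finite α] (G : SimpleGraph α) :
    BddAbove {n : ℕ | ∃ M : G.Subgraph, M.IsMatching ∧ M.edgeSet.ncard = n} := by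
  refine ⟨(Set.univ : Set (Sym2 α)).ncard, ?_⟩
  rintro n ⟨M, _, rfl⟩
  exact Set.ncard_le_ncard (Set.subset_univ _) Set.finite_univ

lemma le_matchNum [Finite α] {G : SimpleGraph α} (M : G.Subgraph) (hM : M.IsMatching) :
    M.edgeSet.ncard ≤ matchNum G :=
  le_csSup (matchNum_bddAbove G) ⟨M, hM, rfl⟩

lemma matchNum_exists [Finite α] (G : SimpleGraph α) :
    ∃ M : G.Subgraph, M.IsMatching ∧ M.edgeSet.ncard = matchNum G := by
  have hne : {n : ℕ | ∃ M : G.Subgraph, M.IsMatching ∧ M.edgeSet.ncard = n}.Nonempty := by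
    refine ⟨0, ⊥, ?_, ?_⟩
    · intro v hv
      simp only [SimpleGraph.Subgraph.verts_bot, Set.mem_empty_iff_false] at hv
    · simp
  exact Nat.sSup_mem hne (matchNum_bddAbove G)

end AuxMN

section AuxMatch
open Function Matrix Equiv Module

variable {α : Type*}

/-- the pairing involution of a matching on its vertex set -/
lemma matching_involution {G : SimpleGraph α} {M : G.Subgraph} (hM : M.IsMatching) :
    ∃ τ : Equiv.Perm ↥M.verts, (∀ v : ↥M.verts, M.Adj (v : α) ((τ v : ↥M.verts) : α)) ∧
      (∀ v : ↥M.verts, τ (τ v) = v) ∧ ∀ v : ↥M.verts, τ v ≠ v := by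
  have hex : ∀ v : ↥M.verts, ∃ w : ↥M.verts, M.Adj (v : α) (w : α) ∧
      ∀ u : ↥M.verts, M.Adj (v : α) (u : α) → u = w := by
    intro v
    obtain ⟨w, hw, huniq⟩ := hM v.2
    refine ⟨⟨w, M.edge_vert hw.symm⟩, hw, ?_⟩
    intro u hu
    exact Subtype.ext (huniq _ hu)
  choose f hf huniq using hex
  have hinv : Function.Involutive f := by
    intro v
    exact (huniq (f v) v ((hf v).symm)).symm
  refine ⟨hinv.toPerm f, fun v => hf v, fun v => hinv v, fun v => ?_⟩
  intro h
  have h2 := (hf v).ne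
  have h3 : f v = v := h
  rw [h3] at h2
  exact h2 rfl

lemma matching_verts_ncard_eq {G : SimpleGraph α} [Fintype α] {M : G.Subgraph}
    (hM : M.IsMatching) : M.verts.ncard = 2 * M.edgeSet.ncard := by
  classical
  obtain ⟨τ, hadj, hinv, hne⟩ := matching_involution hM
  haveI : Fintype ↥M.verts := Fintype.ofFinite _
  obtain ⟨R, hRu, hRp⟩ := exists_rep_finset τ hinv Finset.univ
    (fun i _ => Finset.mem_univ _) (fun i _ => hne i)
  have hdisj : Disjoint R (R.image τ) := by
    rw [Finset.disjoint_right]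
    rintro x hx hxR
    obtain ⟨r, hr, rfl⟩ := Finset.mem_image.mp hx
    exact hRp r hr hxR
  have hcardv : Fintype.card ↥M.verts = 2 * R.card := by
    rw [← Finset.card_univ, ← hRu, Finset.card_union_of_disjoint hdisj,
      Finset.card_image_of_injective _ τ.injective]
    omega
  -- edge set is the image of R
  have hedge : M.edgeSet = ↑(R.image (fun r : ↥M.verts => s((r : α), ((τ r : ↥M.verts) : α)))) := by
    ext e
    constructor
    · intro he
      induction e with
      | _ u v =>
        rw [SimpleGraph.Subgraph.mem_edgeSet] at he
        have hu : u ∈ M.verts := M.edge_vert he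
        have hv : v ∈ M.verts := M.edge_vert he.symm
        have hτu : τ ⟨u, hu⟩ = ⟨v, hv⟩ := by
          obtain ⟨w, hw, huniq⟩ := hM hu
          have h1 : ((τ ⟨u, hu⟩ : ↥M.verts) : α) = w := huniq _ (hadj ⟨u, hu⟩)
          have h2 : v = w := huniq _ he
          apply Subtype.ext
          rw [h1]
          exact h2.symm
        by_cases hR : (⟨u, hu⟩ : ↥M.verts) ∈ R
        · refine Finset.mem_coe.mpr (Finset.mem_image.mpr ⟨⟨u, hu⟩, hR, ?_⟩)
          rw [hτu]
        · have hmem : (⟨u, hu⟩ : ↥M.verts) ∈ R ∪ R.image τ := hRu ▸ Finset.mem_univ _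
          rcases Finset.mem_union.mp hmem with h | h
          · exact absurd h hR
          · obtain ⟨r, hr, hru⟩ := Finset.mem_image.mp h
            refine Finset.mem_coe.mpr (Finset.mem_image.mpr ⟨r, hr, ?_⟩)
            have hrv : r = ⟨v, hv⟩ := by
              have h5 := congrArg τ hru
              rw [hinv] at h5
              rw [h5, hτu]
            have hru' : ((τ r : ↥M.verts) : α) = u := by rw [hru]
            have hrv' : (r : α) = v := by rw [hrv]
            rw [hru', hrv']
            exact Sym2.eq_swap
    · intro he
      obtain ⟨r, _, rfl⟩ := Finset.mem_image.mp (Finset.mem_coe.mp he)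
      rw [SimpleGraph.Subgraph.mem_edgeSet]
      exact hadj r
  have hedgecard : M.edgeSet.ncard = R.card := by
    rw [hedge, Set.ncard_coe_finset]
    rw [Finset.card_image_of_injOn]
    intro x hx y hy hxy
    rw [Sym2.eq_iff] at hxy
    rcases hxy with ⟨h1, _⟩ | ⟨h1, h2⟩
    · exact Subtype.ext h1
    · exfalso
      have hxy' : x = τ y := Subtype.ext h1
      rw [hxy'] at hx
      exact hRp y hy hx
  rw [← Nat.card_coe_set_eq, Nat.card_eq_fintype_card, hcardv, hedgecard]

end AuxMatch

section AuxMB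
open Function Matrix Equiv Module

variable {α : Type*}

lemma card_le_matchNum_of_disjoint_edges [Fintype α] {G : SimpleGraph α} {n : ℕ}
    (φ ψ : Fin n → α) (hφ : Injective φ) (hψ : Injective ψ) (T : Finset (Fin n))
    (hadj : ∀ i ∈ T, G.Adj (φ i) (ψ i))
    (hdisj : ∀ i ∈ T, ∀ j ∈ T, φ i ≠ ψ j) :
    T.card ≤ matchNum G := by
  classical
  set s : Set α := φ '' ↑T with hs
  set t : Set α := ψ '' ↑T with ht
  have hst : Disjoint s t := by
    rw [Set.disjoint_left]
    rintro x ⟨i, hi, rfl⟩ ⟨j, hj, hji⟩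
    exact hdisj i (Finset.mem_coe.mp hi) j (Finset.mem_coe.mp hj) hji.symm
  -- equivalence between s and t
  let e₁ : ↥(↑T : Set (Fin n)) ≃ ↥s := Equiv.Set.image φ ↑T hφ
  let e₂ : ↥(↑T : Set (Fin n)) ≃ ↥t := Equiv.Set.image ψ ↑T hψ
  let e : ↥s ≃ ↥t := e₁.symm.trans e₂
  have hadje : ∀ v : ↥s, G.Adj ↑v ↑(e v) := by
    intro v
    have hv : (v : α) = φ ↑(e₁.symm v) := by
      conv_lhs => rw [← e₁.apply_symm_apply v]
      rw [Equiv.Set.image_apply]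
    have hev : ((e v : ↥t) : α) = ψ ↑(e₁.symm v) := by
      show ((e₂ (e₁.symm v) : ↥t) : α) = _
      rw [Equiv.Set.image_apply]
    rw [hv, hev]
    exact hadj _ (Finset.mem_coe.mp (e₁.symm v).2)
  obtain ⟨M, hMverts, hMmatch⟩ :=
    SimpleGraph.Subgraph.IsMatching.exists_of_disjoint_sets_of_equiv hst e hadje
  have hcard : M.verts.ncard = 2 * T.card := by
    rw [hMverts, Set.ncard_union_eq hst (Set.toFinite s) (Set.toFinite t), hs, ht,
      Set.ncard_image_of_injective _ hφ, Set.ncard_image_of_injective _ hψ,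
      Set.ncard_coe_finset]
    omega
  have h2 := matching_verts_ncard_eq hMmatch
  have hedge : M.edgeSet.ncard = T.card := by omega
  calc T.card = M.edgeSet.ncard := hedge.symm
    _ ≤ matchNum G := le_matchNum M hMmatch

end AuxMB

section AuxDet
open Function Matrix Equiv Module


variable {V ν α : Type*}

lemma det_unitgain_ne_zero [Fintype V] [Fintype ν] [DecidableEq ν]
    {G : SimpleGraph V} {H : Matrix V V ℂ} (hH : IsUnitGain G H)
    {F : SimpleGraph α} (hF : F.IsAcyclic) (p : ν → α) (hp : Injective p)
    (em : ν → V)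
    (hFadj : ∀ i j : ν, H (em i) (em j) ≠ 0 → F.Adj (p i) (p j))
    (τ : Equiv.Perm ν) (hτ : ∀ i, H (em (τ i)) (em i) ≠ 0) :
    (H.submatrix em em).det ≠ 0 := by
  classical
  set A := H.submatrix em em with hA
  set P : Equiv.Perm ν → ℂ := fun σ => ∏ i, A (σ i) i with hP
  set c : ℕ := Fintype.card ν / 2 with hc
  -- each nonzero term equals sign • 1 with uniform sign
  have hterm : ∀ σ : Equiv.Perm ν, P σ ≠ 0 →
      Equiv.Perm.sign σ • P σ = ((-1 : ℂ)) ^ c := by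
    intro σ hPσ
    have hne : ∀ i, A (σ i) i ≠ 0 := by
      intro i
      exact Finset.prod_ne_zero_iff.mp hPσ i (Finset.mem_univ i)
    have hadj : ∀ i, F.Adj (p i) (p (σ i)) := by
      intro i
      exact (hFadj (σ i) i (hne i)).symm
    have hGadj : ∀ i, G.Adj (em (σ i)) (em i) := by
      intro i
      by_contra hno
      exact hne i (hH.2.2 _ _ hno)
    have hinvol : ∀ i, σ (σ i) = i :=
      acyclic_perm_involutive hF p hp σ hadj
    have hfp : ∀ i, σ i ≠ i := by
      intro i h
      exact (hadj i).ne (by rw [h])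
    -- product is 1
    have hprod : P σ = 1 := by
      rw [hP]
      refine Finset.prod_involution (fun a _ => σ a) ?_ ?_ (fun a _ => Finset.mem_univ _) ?_
      · intro a _
        have h1 : A (σ (σ a)) (σ a) = A a (σ a) := by rw [hinvol]
        rw [h1]
        have h2 : A a (σ a) = star (A (σ a) a) := (hH.1.submatrix em).apply _ _ |>.symm
        rw [h2, Complex.star_def, Complex.mul_conj]
        have habs : ‖A (σ a) a‖ = 1 := hH.2.1 _ _ (hGadj a)
        rw [Complex.normSq_eq_norm_sq, habs]
        norm_num
      · intro a _ _
        exact hfp a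
      · intro a _
        exact hinvol a
    have hsign := sign_of_fpf_involution σ hinvol hfp
    have husmul : ∀ (u : ℤˣ) (z : ℂ), u • z = ((u : ℤ) : ℂ) * z := by
      intro u z
      rw [Units.smul_def, zsmul_eq_mul]
    rw [hprod, hsign.1, husmul, mul_one, hc]
    push_cast
    ring
  have hτP : P τ ≠ 0 := Finset.prod_ne_zero_iff.mpr (fun i _ => hτ i)
  have hdet : A.det = ∑ σ : Equiv.Perm ν, (if P σ ≠ 0 then ((-1:ℂ))^c else 0) := by
    rw [Matrix.det_apply]
    refine Finset.sum_congr rfl fun σ _ => ?_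
    by_cases h : P σ = 0
    · rw [if_neg (by simpa using h)]
      show Equiv.Perm.sign σ • P σ = 0
      rw [h, smul_zero]
    · rw [if_pos h]
      exact hterm σ h
  rw [hdet, ← Finset.sum_filter, Finset.sum_const]
  apply smul_ne_zero
  · exact Finset.card_ne_zero_of_mem (Finset.mem_filter.mpr ⟨Finset.mem_univ _, hτP⟩)
  · exact pow_ne_zero _ (by norm_num)

end AuxDet

/-- **Theorem.** For a connected complex unit gain graph `(G, H)`:
for every proper vertex subset `V₀` with `G - V₀` acyclic,
`2m(G - V₀) ≤ rank(H)`; and `rank(H) ≤ 2m(G) + b(G)`. -/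
theorem rank_bounds_acyclic_bipartite {V : Type*} [Fintype V]
    (G : SimpleGraph V) (H : Matrix V V ℂ)
    (hH : IsUnitGain G H) (hG : G.Connected) :
    (∀ V₀ : Set V, V₀ ≠ Set.univ → (G.induce V₀ᶜ).IsAcyclic →
        2 * matchNum (G.induce V₀ᶜ) ≤ H.rank) ∧
      H.rank ≤ 2 * matchNum G + bipNum G := by
  classical
  constructor
  · intro V₀ _ hacyc
    obtain ⟨M, hM, hMcard⟩ := matchNum_exists (G.induce V₀ᶜ)
    obtain ⟨τ, hτadj, hτinv, hτne⟩ := matching_involution hM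
    haveI : Fintype ↥M.verts := Fintype.ofFinite _
    set em : ↥M.verts → V := fun w => ((w : ↥V₀ᶜ) : V) with hem
    have hFadj : ∀ i j : ↥M.verts, H (em i) (em j) ≠ 0 →
        (G.induce V₀ᶜ).Adj (i : ↥V₀ᶜ) (j : ↥V₀ᶜ) := by
      intro i j hne
      have hGAdj : G.Adj (em i) (em j) := by
        by_contra hno; exact hne (hH.2.2 _ _ hno)
      exact hGAdj
    have hτ0 : ∀ i, H (em (τ i)) (em i) ≠ 0 := by
      intro i
      have hMAdj : M.Adj ((τ i : ↥V₀ᶜ)) (i : ↥V₀ᶜ) := (hτadj i).symm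
      have hFAdj : (G.induce V₀ᶜ).Adj ((τ i : ↥V₀ᶜ)) (i : ↥V₀ᶜ) := M.adj_sub hMAdj
      have hGAdj : G.Adj (em (τ i)) (em i) := hFAdj
      have habs := hH.2.1 _ _ hGAdj
      intro h0
      rw [h0] at habs
      simp at habs
    have hdet := det_unitgain_ne_zero hH hacyc (Subtype.val : ↥M.verts → ↥V₀ᶜ)
      Subtype.coe_injective em hFadj τ hτ0
    have hunit : IsUnit (H.submatrix em em) :=
      (Matrix.isUnit_iff_isUnit_det _).mpr (isUnit_iff_ne_zero.mpr hdet)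
    have hrank := Matrix.rank_of_isUnit _ hunit
    have hle : (H.submatrix em em).rank ≤ H.rank := rank_submatrix_le'' H em em
    have hcards : Fintype.card ↥M.verts = 2 * matchNum (G.induce V₀ᶜ) := by
      rw [← Nat.card_eq_fintype_card, Nat.card_coe_set_eq,
        matching_verts_ncard_eq hM, hMcard]
    omega
  · -- upper bound
    have hbipmem : ∃ S : Set V, S.ncard = bipNum G ∧ (G.induce Sᶜ).Colorable 2 := by
      have hmem : bipNum G ∈ {n : ℕ | ∃ S : Set V, S.ncard = n ∧ (G.induce Sᶜ).Colorable 2} := by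
        apply Nat.sInf_mem
        refine ⟨(Set.univ : Set V).ncard, Set.univ, rfl, ?_⟩
        haveI : IsEmpty ↥((Set.univ : Set V)ᶜ) := by
          rw [Set.isEmpty_coe_sort, Set.compl_univ]
        exact SimpleGraph.Colorable.of_isEmpty 2
      exact hmem
    obtain ⟨S₀, hS₀card, hS₀col⟩ := hbipmem
    obtain ⟨c⟩ := hS₀col
    set w : V → ℂ := fun v => if v ∈ S₀ then 1 else 0 with hw
    set w' : V → ℂ := fun v => if v ∈ S₀ then 0 else 1 with hw'
    set E := Matrix.diagonal w with hE
    set E' := Matrix.diagonal w' with hE'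
    have hEE' : E + E' = 1 := by
      have hww : (fun i => w i + w' i) = fun _ => (1:ℂ) := by
        funext v
        by_cases hv : v ∈ S₀ <;> simp [hw, hw', hv]
      rw [hE, hE', Matrix.diagonal_add, hww]
      exact Matrix.diagonal_one
    have hsplit : H = E * H + E' * H := by
      rw [← Matrix.add_mul, hEE', Matrix.one_mul]
    have hr1 : H.rank ≤ (E * H).rank + (E' * H).rank := by
      conv_lhs => rw [hsplit]
      exact rank_add_le' _ _
    have hrE : (E * H).rank ≤ bipNum G := by
      refine (Matrix.rank_mul_le_left _ _).trans ?_
      rw [hE, Matrix.rank_diagonal]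
      rw [← hS₀card, ← Nat.card_coe_set_eq, Nat.card_eq_fintype_card]
      apply le_of_eq
      apply Fintype.card_congr
      apply Equiv.subtypeEquivRight
      intro x
      by_cases hx : x ∈ S₀ <;> simp [hw, hx]
    -- now bound rank (E' * H) by 2 * matchNum G
    set N := E' * H with hN
    obtain ⟨f, g, hfInj, hgInj, hUnit⟩ := exists_invertible_submatrix N
    obtain ⟨σ, hσ⟩ := exists_perm_of_isUnit hUnit
    have hfS : ∀ i, f i ∉ S₀ := by
      intro i hfi
      have hrow : ∀ j, (N.submatrix f g) i j = 0 := by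
        intro j
        show (E' * H) (f i) (g j) = 0
        rw [hE', Matrix.diagonal_mul]
        simp [hw', hfi]
      have hdet0 : (N.submatrix f g).det = 0 := Matrix.det_eq_zero_of_row_eq_zero i hrow
      have := (Matrix.isUnit_iff_isUnit_det _).mp hUnit
      rw [hdet0] at this
      exact not_isUnit_zero this
    have hentry : ∀ i, H (f (σ i)) (g i) ≠ 0 := by
      intro i
      have h1 := hσ i
      have h2 : (N.submatrix f g) (σ i) i = w' (f (σ i)) * H (f (σ i)) (g i) := by
        show (E' * H) (f (σ i)) (g i) = _
        rw [hE', Matrix.diagonal_mul]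
      rw [h2] at h1
      exact fun h0 => h1 (by rw [h0, mul_zero])
    have hGadj : ∀ i, G.Adj (f (σ i)) (g i) := by
      intro i
      by_contra hno
      exact hentry i (hH.2.2 _ _ hno)
    have hfmem : ∀ i, f (σ i) ∈ S₀ᶜ := fun i => Set.mem_compl (hfS (σ i))
    set colf : Fin N.rank → Fin 2 := fun i => c ⟨f (σ i), hfmem i⟩ with hcolf
    set colg : Fin N.rank → Fin 2 :=
      fun i => if h : g i ∈ S₀ then 0 else c ⟨g i, Set.mem_compl h⟩ with hcolg
    -- if both endpoints outside S₀, the colors differ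
    have hdiff : ∀ i, g i ∉ S₀ → colf i ≠ colg i := by
      intro i hgi
      have hadj' : (G.induce S₀ᶜ).Adj ⟨f (σ i), hfmem i⟩ ⟨g i, Set.mem_compl hgi⟩ :=
        hGadj i
      have := c.valid hadj'
      rw [hcolf, hcolg]
      simpa [hgi] using this
    have h01 : ∀ x : Fin 2, ¬x = 0 → x = 1 := by decide
    -- the four classes
    set T0 : Finset (Fin N.rank) := Finset.univ.filter (fun i => g i ∉ S₀ ∧ colg i = 0) with hT0
    set T1 : Finset (Fin N.rank) := Finset.univ.filter (fun i => g i ∉ S₀ ∧ ¬colg i = 0) with hT1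
    set TS0 : Finset (Fin N.rank) := Finset.univ.filter (fun i => g i ∈ S₀ ∧ colf i = 0) with hTS0
    set TS1 : Finset (Fin N.rank) := Finset.univ.filter (fun i => g i ∈ S₀ ∧ ¬colf i = 0) with hTS1
    have hcardsum : T0.card + T1.card + TS0.card + TS1.card = N.rank := by
      have hA : T0.card + T1.card = (Finset.univ.filter (fun i => g i ∉ S₀)).card := by
        rw [hT0, hT1, ← Finset.filter_filter, ← Finset.filter_filter]
        exact Finset.card_filter_add_card_filter_not _
      have hB : TS0.card + TS1.card = (Finset.univ.filter (fun i => g i ∈ S₀)).card := by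
        rw [hTS0, hTS1, ← Finset.filter_filter, ← Finset.filter_filter]
        exact Finset.card_filter_add_card_filter_not _
      have hC : (Finset.univ.filter (fun i => g i ∈ S₀)).card
          + (Finset.univ.filter (fun i => g i ∉ S₀)).card = N.rank := by
        rw [Finset.card_filter_add_card_filter_not, Finset.card_univ, Fintype.card_fin]
      omega
    -- first matching : T0 ∪ TS1
    have hm1 : (T0 ∪ TS1).card ≤ matchNum G := by
      apply card_le_matchNum_of_disjoint_edges (fun i => f (σ i)) g
        (hfInj.comp σ.injective) hgInj
      · intro i _
        exact hGadj i
      · intro i hi j hj hfg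
        rcases Finset.mem_union.mp hj with hj0 | hjS
        · -- g j ∉ S₀, colg j = 0
          obtain ⟨hgj, hcj⟩ := (Finset.mem_filter.mp hj0).2
          have hcfi : colf i = colg j := by
            have h2 : colg j = c ⟨g j, Set.mem_compl hgj⟩ := by
              show (if h : g j ∈ S₀ then (0 : Fin 2) else c ⟨g j, Set.mem_compl h⟩) = _
              rw [dif_neg hgj]
            rw [h2]
            show c ⟨f (σ i), hfmem i⟩ = c ⟨g j, Set.mem_compl hgj⟩
            congr 1
            exact Subtype.ext hfg
          rcases Finset.mem_union.mp hi with hi0 | hiS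
          · obtain ⟨hgi, hci⟩ := (Finset.mem_filter.mp hi0).2
            exact hdiff i hgi (by rw [hcfi, hcj, hci])
          · obtain ⟨_, hci⟩ := (Finset.mem_filter.mp hiS).2
            exact hci (by rw [hcfi, hcj])
        · -- g j ∈ S₀ but f (σ i) ∉ S₀
          obtain ⟨hgj, _⟩ := (Finset.mem_filter.mp hjS).2
          exact hfS (σ i) (hfg ▸ hgj)
    -- second matching : T1 ∪ TS0
    have hm2 : (T1 ∪ TS0).card ≤ matchNum G := by
      apply card_le_matchNum_of_disjoint_edges (fun i => f (σ i)) g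
        (hfInj.comp σ.injective) hgInj
      · intro i _
        exact hGadj i
      · intro i hi j hj hfg
        rcases Finset.mem_union.mp hj with hj1 | hjS
        · obtain ⟨hgj, hcj⟩ := (Finset.mem_filter.mp hj1).2
          have hcfi : colf i = colg j := by
            have h2 : colg j = c ⟨g j, Set.mem_compl hgj⟩ := by
              show (if h : g j ∈ S₀ then (0 : Fin 2) else c ⟨g j, Set.mem_compl h⟩) = _
              rw [dif_neg hgj]
            rw [h2]
            show c ⟨f (σ i), hfmem i⟩ = c ⟨g j, Set.mem_compl hgj⟩
            congr 1
            exact Subtype.ext hfg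
          rcases Finset.mem_union.mp hi with hi1 | hiS
          · obtain ⟨hgi, hci⟩ := (Finset.mem_filter.mp hi1).2
            exact hdiff i hgi (by rw [hcfi, h01 _ hcj, h01 _ hci])
          · obtain ⟨_, hci⟩ := (Finset.mem_filter.mp hiS).2
            exact hcj (by rw [← hcfi, hci])
        · obtain ⟨hgj, _⟩ := (Finset.mem_filter.mp hjS).2
          exact hfS (σ i) (hfg ▸ hgj)
    -- disjointness of the unions
    have hd1 : Disjoint T0 TS1 := by
      rw [Finset.disjoint_left]
      intro a ha hb
      exact (Finset.mem_filter.mp ha).2.1 (Finset.mem_filter.mp hb).2.1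
    have hd2 : Disjoint T1 TS0 := by
      rw [Finset.disjoint_left]
      intro a ha hb
      exact (Finset.mem_filter.mp ha).2.1 (Finset.mem_filter.mp hb).2.1
    rw [Finset.card_union_of_disjoint hd1] at hm1
    rw [Finset.card_union_of_disjoint hd2] at hm2
    omega
end

section
/- Let G be a simple graph with vertex set {v_1, …, v_n} and let A be any n × n complex matrix (a_{i,j}) such that a_{i,j} = 0 whenever v_i v_j is not an edge of G (in particular A has zero diagonal). Then for every subset S of the vertex set such that G − S is bipartite, rank(A) ≤ 2m(G) + |S|, where m(G) is the matching number of G. -/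
section Aux

open Matrix Module Submodule

/-- Every matrix has `rank M` linearly independent rows. -/
lemma exists_indep_rows {m n : Type*} [Fintype m] [Fintype n] (M : Matrix m n ℂ) :
    ∃ f : Fin M.rank → m, LinearIndependent ℂ (fun i => M (f i)) := by
  classical
  obtain ⟨b, hbsub, hbspan, hbind⟩ := exists_linearIndependent ℂ (Set.range M)
  have hbfin : b.Finite := hbind.setFinite
  haveI := hbfin.fintype
  have hcard : b.toFinset.card = M.rank := by
    rw [M.rank_eq_finrank_span_row, Matrix.row, ← hbspan, finrank_span_set_eq_card hbind]
  obtain e := (Fintype.equivFinOfCardEq (by simpa using hcard) : b ≃ Fin M.rank)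
  refine ⟨fun i => Classical.choose (hbsub (e.symm i).2), ?_⟩
  have hspec : ∀ i, M (Classical.choose (hbsub (e.symm i).2)) = (e.symm i : n → ℂ) :=
    fun i => Classical.choose_spec (hbsub (e.symm i).2)
  have : (fun i => M (Classical.choose (hbsub (e.symm i).2)))
      = (fun x : b => (x : n → ℂ)) ∘ e.symm := funext fun i => hspec i
  rw [this]
  exact hbind.comp e.symm e.symm.injective

/-- Every matrix has an invertible square submatrix of size its rank. -/
lemma exists_sq_submatrix {m n : Type*} [Fintype m] [Fintype n] (M : Matrix m n ℂ) :
    ∃ (f : Fin M.rank → m) (g : Fin M.rank → n), (M.submatrix f g).det ≠ 0 := by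
  classical
  obtain ⟨f, hf⟩ := exists_indep_rows M
  set B := M.submatrix f id with hB
  have hBrows : ∀ i, B i = M (f i) := fun i => rfl
  have hBrank : B.rank = M.rank := by
    have : LinearIndependent ℂ (fun i => B i) := by
      simpa [funext hBrows] using hf
    rw [LinearIndependent.rank_matrix (M := B) this, Fintype.card_fin]
  have hBT : Bᵀ.rank = M.rank := by rw [Matrix.rank_transpose, hBrank]
  obtain ⟨g', hg'⟩ := exists_indep_rows Bᵀ
  set g : Fin M.rank → n := g' ∘ (finCongr hBT.symm) with hg
  refine ⟨f, g, ?_⟩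
  have hind : LinearIndependent ℂ (fun j => Bᵀ (g j)) :=
    hg'.comp (finCongr hBT.symm) (finCongr hBT.symm).injective
  have hcols : ∀ j, (M.submatrix f g)ᵀ j = Bᵀ (g j) := fun j => rfl
  have : LinearIndependent ℂ (fun j => (M.submatrix f g)ᵀ j) := by
    simpa [funext hcols] using hind
  have := Matrix.linearIndependent_cols_iff_isUnit.mp this
  rw [Matrix.isUnit_iff_isUnit_det] at this
  exact this.ne_zero

/-- A matrix with nonzero determinant has a generalized diagonal of nonzero entries. -/
lemma exists_perm_of_det_ne_zero {r : ℕ} (D : Matrix (Fin r) (Fin r) ℂ) (h : D.det ≠ 0) :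
    ∃ σ : Equiv.Perm (Fin r), ∀ i, D (σ i) i ≠ 0 := by
  rw [Matrix.det_apply] at h
  obtain ⟨σ, hσ⟩ := Finset.exists_ne_zero_of_sum_ne_zero h
  refine ⟨σ, fun i => ?_⟩
  intro hzero
  apply hσ.2
  have : (∏ i, D (σ i) i) = 0 := Finset.prod_eq_zero (Finset.mem_univ i) hzero
  rw [this, smul_zero]

/-- `r` pairwise vertex-disjoint edges give a matching of size `r`. -/
lemma le_matchNum_of_edges {V : Type*} [Fintype V] (G : SimpleGraph V) (r : ℕ)
    (x y : Fin r → V) (hx : Function.Injective x) (hy : Function.Injective y)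
    (hxy : ∀ i j, x i ≠ y j) (hadj : ∀ i, G.Adj (x i) (y i)) : r ≤ matchNum G := by
  classical
  set M : G.Subgraph :=
    { verts := Set.range x ∪ Set.range y
      Adj := fun a b => ∃ i, (a = x i ∧ b = y i) ∨ (a = y i ∧ b = x i)
      adj_sub := by rintro a b ⟨i, ⟨rfl, rfl⟩ | ⟨rfl, rfl⟩⟩
                    exacts [hadj i, (hadj i).symm]
      edge_vert := by rintro a b ⟨i, ⟨rfl, rfl⟩ | ⟨rfl, rfl⟩⟩
                      exacts [Or.inl ⟨i, rfl⟩, Or.inr ⟨i, rfl⟩]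
      symm := ⟨by rintro a b ⟨i, ⟨rfl, rfl⟩ | ⟨rfl, rfl⟩⟩
                  exacts [⟨i, Or.inr ⟨rfl, rfl⟩⟩, ⟨i, Or.inl ⟨rfl, rfl⟩⟩]⟩ } with hM
  have hmatch : M.IsMatching := by
    rintro v (⟨i, rfl⟩ | ⟨i, rfl⟩)
    · refine ⟨y i, ⟨i, Or.inl ⟨rfl, rfl⟩⟩, ?_⟩
      rintro w ⟨j, ⟨hj1, rfl⟩ | ⟨hj1, rfl⟩⟩
      · rw [hx hj1]
      · exact absurd hj1 (hxy i j)
    · refine ⟨x i, ⟨i, Or.inr ⟨rfl, rfl⟩⟩, ?_⟩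
      rintro w ⟨j, ⟨hj1, rfl⟩ | ⟨hj1, rfl⟩⟩
      · exact absurd hj1.symm (hxy j i)
      · rw [hy hj1]
  have hedge : M.edgeSet = Set.range (fun i => s(x i, y i)) := by
    ext e
    induction e using Sym2.ind with
    | _ a b =>
      simp only [SimpleGraph.Subgraph.mem_edgeSet, Set.mem_range, hM]
      constructor
      · rintro ⟨i, ⟨rfl, rfl⟩ | ⟨rfl, rfl⟩⟩
        · exact ⟨i, rfl⟩
        · exact ⟨i, Sym2.eq_swap⟩
      · rintro ⟨i, hi⟩
        rw [Sym2.eq_iff] at hi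
        rcases hi with ⟨rfl, rfl⟩ | ⟨rfl, rfl⟩
        · exact ⟨i, Or.inl ⟨rfl, rfl⟩⟩
        · exact ⟨i, Or.inr ⟨rfl, rfl⟩⟩
  have hinj : Function.Injective (fun i => s(x i, y i)) := by
    intro i j hij
    simp only [Sym2.eq_iff] at hij
    rcases hij with ⟨h1, _⟩ | ⟨h1, _⟩
    · exact hx h1
    · exact absurd h1 (hxy i j)
  have hcard : M.edgeSet.ncard = r := by
    rw [hedge, ← Set.image_univ, Set.ncard_image_of_injective _ hinj, Set.ncard_univ,
      Nat.card_eq_fintype_card, Fintype.card_fin]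
  have hbdd : BddAbove {n : ℕ | ∃ M : G.Subgraph, M.IsMatching ∧ M.edgeSet.ncard = n} := by
    refine ⟨G.edgeSet.ncard, ?_⟩
    rintro n ⟨N, _, rfl⟩
    exact Set.ncard_le_ncard N.edgeSet_subset (Set.toFinite _)
  exact le_csSup hbdd ⟨M, hmatch, hcard⟩

lemma range_submatrix_rows {V : Type*} [Fintype V] (A : Matrix V V ℂ) (X : Set V) :
    Set.range (A.submatrix (Subtype.val : X → V) id) = A '' X := by
  exact (Set.image_eq_range (A : V → V → ℂ) X).symm

lemma rank_submatrix_rows_eq {V : Type*} [Fintype V] (A : Matrix V V ℂ) (X : Set V)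
    [Fintype X] :
    (A.submatrix (Subtype.val : X → V) id).rank = finrank ℂ (span ℂ (A '' X)) := by
  rw [Matrix.rank_eq_finrank_span_row, Matrix.row, range_submatrix_rows]

lemma rank_le_three_blocks {V : Type*} [Fintype V] (A : Matrix V V ℂ) (X Y S : Set V)
    [Fintype X] [Fintype Y] [Fintype S]
    (hcov : ∀ v : V, v ∈ X ∨ v ∈ Y ∨ v ∈ S) :
    A.rank ≤ (A.submatrix (Subtype.val : X → V) id).rank
      + (A.submatrix (Subtype.val : Y → V) id).rank + Fintype.card S := by
  classical
  have hS : (A.submatrix (Subtype.val : S → V) id).rank ≤ Fintype.card S :=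
    Matrix.rank_le_card_height _
  rw [Matrix.rank_eq_finrank_span_row, rank_submatrix_rows_eq, rank_submatrix_rows_eq]
  rw [rank_submatrix_rows_eq] at hS
  have hle : span ℂ (Set.range A) ≤ span ℂ (A '' X) ⊔ (span ℂ (A '' Y) ⊔ span ℂ (A '' S)) := by
    rw [span_le]
    rintro _ ⟨v, rfl⟩
    rcases hcov v with hv | hv | hv
    · exact Submodule.mem_sup_left (subset_span ⟨v, hv, rfl⟩)
    · exact Submodule.mem_sup_right (Submodule.mem_sup_left (subset_span ⟨v, hv, rfl⟩))
    · exact Submodule.mem_sup_right (Submodule.mem_sup_right (subset_span ⟨v, hv, rfl⟩))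
  calc finrank ℂ (span ℂ (Set.range A))
      ≤ finrank ℂ ↥(span ℂ (A '' X) ⊔ (span ℂ (A '' Y) ⊔ span ℂ (A '' S))) :=
        Submodule.finrank_mono hle
    _ ≤ finrank ℂ (span ℂ (A '' X)) + finrank ℂ ↥(span ℂ (A '' Y) ⊔ span ℂ (A '' S)) :=
        Submodule.finrank_add_le_finrank_add_finrank _ _
    _ ≤ finrank ℂ (span ℂ (A '' X)) + (finrank ℂ (span ℂ (A '' Y)) + finrank ℂ (span ℂ (A '' S))) := by
        gcongr
        exact Submodule.finrank_add_le_finrank_add_finrank _ _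
    _ ≤ _ := by omega

/-- The rank of the rows indexed by an independent set is at most the matching number. -/
lemma rank_rows_le_matchNum {V : Type*} [Fintype V] (G : SimpleGraph V)
    (A : Matrix V V ℂ) (hA : ∀ i j, ¬ G.Adj i j → A i j = 0)
    (X : Set V) [Fintype X] (hXind : ∀ u v, u ∈ X → v ∈ X → ¬ G.Adj u v) :
    (A.submatrix (Subtype.val : X → V) id).rank ≤ matchNum G := by
  classical
  set B := A.submatrix (Subtype.val : X → V) id with hB
  obtain ⟨f, g, hdet⟩ := exists_sq_submatrix B
  obtain ⟨σ, hσ⟩ := exists_perm_of_det_ne_zero _ hdet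
  have hne : ∀ i, A ↑(f (σ i)) (g i) ≠ 0 := fun i => hσ i
  set x : Fin B.rank → V := fun i => ↑(f (σ i)) with hxdef
  set y : Fin B.rank → V := fun i => g i with hydef
  have hadj : ∀ i, G.Adj (x i) (y i) := fun i => by
    by_contra h
    exact hne i (hA _ _ h)
  have hyX : ∀ i, y i ∉ X := fun i hmem => hXind _ _ (f (σ i)).2 hmem (hadj i)
  have hxinj : Function.Injective x := by
    intro i j hij
    by_contra hij'
    apply hdet
    refine Matrix.det_zero_of_row_eq (M := B.submatrix f g)
      (σ.injective.ne_iff.mpr hij' : σ i ≠ σ j) ?_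
    have : f (σ i) = f (σ j) := Subtype.ext hij
    funext k
    simp [Matrix.submatrix_apply, this]
  have hyinj : Function.Injective y := by
    intro i j hij
    by_contra hij'
    apply hdet
    exact Matrix.det_zero_of_column_eq hij' (fun k => by
      simp only [Matrix.submatrix_apply]
      rw [show g i = g j from hij])
  have hxy : ∀ i j, x i ≠ y j := by
    intro i j h
    exact hyX j (h ▸ (f (σ i)).2)
  exact le_matchNum_of_edges G B.rank x y hxinj hyinj hxy hadj

end Aux

/-- **Lemma.** If `A` is any complex matrix indexed by the vertices of a simple
graph `G` with `A i j = 0` whenever `i` and `j` are non-adjacent, then for every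
vertex subset `S` such that `G - S` is bipartite, `rank(A) ≤ 2m(G) + |S|`. -/
theorem rank_le_of_bipartite_deletion {V : Type*} [Fintype V]
    (G : SimpleGraph V) (A : Matrix V V ℂ)
    (hA : ∀ i j, ¬ G.Adj i j → A i j = 0)
    (S : Set V) (hS : (G.induce Sᶜ).Colorable 2) :
    A.rank ≤ 2 * matchNum G + S.ncard := by
  classical
  obtain ⟨C⟩ := hS
  set X : Set V := {v | ∃ h : v ∈ Sᶜ, C ⟨v, h⟩ = 0} with hXdef
  set Y : Set V := {v | ∃ h : v ∈ Sᶜ, C ⟨v, h⟩ = 1} with hYdef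
  haveI : Fintype X := Fintype.ofFinite _
  haveI : Fintype Y := Fintype.ofFinite _
  haveI : Fintype S := Fintype.ofFinite _
  have hfin2 : ∀ c : Fin 2, c = 0 ∨ c = 1 := by decide
  have hcov : ∀ v : V, v ∈ X ∨ v ∈ Y ∨ v ∈ S := by
    intro v
    by_cases hv : v ∈ S
    · exact Or.inr (Or.inr hv)
    · have hv' : v ∈ Sᶜ := hv
      rcases hfin2 (C ⟨v, hv'⟩) with h | h
      · exact Or.inl ⟨hv', h⟩
      · exact Or.inr (Or.inl ⟨hv', h⟩)
  have hXind : ∀ u v, u ∈ X → v ∈ X → ¬ G.Adj u v := by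
    rintro u v ⟨hu, hcu⟩ ⟨hv, hcv⟩ hadj
    exact C.valid (show (G.induce Sᶜ).Adj ⟨u, hu⟩ ⟨v, hv⟩ from hadj) (hcu.trans hcv.symm)
  have hYind : ∀ u v, u ∈ Y → v ∈ Y → ¬ G.Adj u v := by
    rintro u v ⟨hu, hcu⟩ ⟨hv, hcv⟩ hadj
    exact C.valid (show (G.induce Sᶜ).Adj ⟨u, hu⟩ ⟨v, hv⟩ from hadj) (hcu.trans hcv.symm)
  have key := rank_le_three_blocks A X Y S hcov
  have h1 := rank_rows_le_matchNum G A hA X hXind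
  have h2 := rank_rows_le_matchNum G A hA Y hYind
  have hcard : Fintype.card S = S.ncard := by
    rw [← Nat.card_eq_fintype_card, Nat.card_coe_set_eq]
  omega
end

section
/- Let (C_q, H) be a complex unit gain cycle of length q ≥ 3, i.e., the underlying graph is the cycle v_1 v_2 ⋯ v_q v_1. Then rank(H) = 2m(C_q) − 2c(C_q) (equivalently, rank(H) = 2⌊q/2⌋ − 2) if and only if q is even and the gain φ(C_q) = H(v_1,v_2)·H(v_2,v_3)⋯H(v_q,v_1) equals (−1)^{q/2}. -/
open Finset Matrix Complex
open Fin.NatCast Fin.CommRing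

section Cycle
variable {n : ℕ} {H : Matrix (Fin (n+3)) (Fin (n+3)) ℂ}

lemma cyc_adj_iff (i j : Fin (n+3)) :
    (SimpleGraph.cycleGraph (n+3)).Adj i j ↔ j = i - 1 ∨ j = i + 1 := by
  have : (n+3) = (n+1)+2 := by ring
  rw [this] at *
  rw [SimpleGraph.cycleGraph_adj]
  constructor
  · rintro (h | h)
    · left; linear_combination -h
    · right; linear_combination h
  · rintro (h | h)
    · left; linear_combination -h
    · right; linear_combination h

variable (hH : IsUnitGain (SimpleGraph.cycleGraph (n+3)) H)
include hH

lemma entry_eq_zero (i j : Fin (n+3)) (h1 : j ≠ i - 1) (h2 : j ≠ i + 1) : H i j = 0 := by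
  exact hH.2.2 i j (by rw [cyc_adj_iff]; tauto)

lemma entry_sub (i : Fin (n+3)) : H i (i - 1) = (starRingEnd ℂ) (H (i-1) ((i-1)+1)) := by
  have := hH.1.apply (i-1) i
  simp only [sub_add_cancel]
  rw [← this]
  simp [Complex.conj_conj]

lemma conj_mul_self (i : Fin (n+3)) : (starRingEnd ℂ) (H i (i+1)) * H i (i+1) = 1 := by
  have hadj : (SimpleGraph.cycleGraph (n+3)).Adj i (i+1) := by
    rw [cyc_adj_iff]; right; rfl
  have h1 : ‖H i (i+1)‖ = 1 := hH.2.1 _ _ hadj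
  rw [mul_comm, Complex.mul_conj, ← Complex.sq_norm, h1]
  norm_num

omit hH in
lemma sub_ne_add (i : Fin (n+3)) : i - 1 ≠ i + 1 := by
  intro h
  have := congrArg (· - i) h
  simp [sub_eq_iff_eq_add] at this
  have h2 : (2 : Fin (n+3)) = 0 := by linear_combination -this
  have := congrArg Fin.val h2
  rw [Fin.val_two] at this
  simp at this

lemma row_eq (x : Fin (n+3) → ℂ) (i : Fin (n+3)) :
    (H *ᵥ x) i = (starRingEnd ℂ) (H (i-1) ((i-1)+1)) * x (i - 1) + H i (i+1) * x (i + 1) := by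
  have : (H *ᵥ x) i = ∑ j, H i j * x j := rfl
  rw [this,
    show ∑ j, H i j * x j = H i (i-1) * x (i-1) + H i (i+1) * x (i+1) from ?_,
    entry_sub hH]
  rw [← Finset.sum_subset (Finset.subset_univ {i-1, i+1})
    (by intro k _ hk; simp at hk; rw [entry_eq_zero hH i k hk.1 hk.2, zero_mul])]
  rw [Finset.sum_pair (sub_ne_add i)]

end Cycle

section Cycle2
variable {n : ℕ} {H : Matrix (Fin (n+3)) (Fin (n+3)) ℂ}
variable (hH : IsUnitGain (SimpleGraph.cycleGraph (n+3)) H)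
include hH

lemma entry_ne_zero (i : Fin (n+3)) : H i (i+1) ≠ 0 := by
  intro h
  have := conj_mul_self hH i
  rw [h, mul_zero] at this
  exact one_ne_zero this.symm

lemma chain_zero {x : Fin (n+3) → ℂ} (hx : H *ᵥ x = 0) (h0 : x 0 = 0) (h1 : x 1 = 0) :
    x = 0 := by
  have key : ∀ j : ℕ, x (j : Fin (n+3)) = 0 := by
    intro j
    induction j using Nat.strong_induction_on with
    | _ j ih =>
      match j with
      | 0 => simpa using h0
      | 1 => simpa using h1
      | (j+2) =>
        have hrow := row_eq hH x ((j+1 : ℕ) : Fin (n+3))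
        rw [hx] at hrow
        have e1 : ((j+1 : ℕ) : Fin (n+3)) - 1 = (j : Fin (n+3)) := by push_cast; ring
        have e2 : ((j+1 : ℕ) : Fin (n+3)) + 1 = ((j+2 : ℕ) : Fin (n+3)) := by push_cast; ring
        rw [e1, ih j (by omega), mul_zero, zero_add] at hrow
        have := mul_eq_zero.mp hrow.symm
        rcases this with h | h
        · exact absurd h (entry_ne_zero hH _)
        · rw [← e2]; exact h
  funext i
  rw [← Fin.cast_val_eq_self i]
  exact key i.val

lemma finrank_ker_le_two : Module.finrank ℂ (LinearMap.ker H.mulVecLin) ≤ 2 := by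
  classical
  let π : (Fin (n+3) → ℂ) →ₗ[ℂ] ℂ × ℂ :=
    LinearMap.prod (LinearMap.proj 0) (LinearMap.proj 1)
  have hinj : Function.Injective (π.comp (LinearMap.ker H.mulVecLin).subtype) := by
    rw [← LinearMap.ker_eq_bot, LinearMap.ker_eq_bot']
    intro ⟨x, hx⟩ hpx
    have hx' : H *ᵥ x = 0 := hx
    have h0 : x 0 = 0 := by
      have := congrArg Prod.fst hpx; simpa [π] using this
    have h1 : x 1 = 0 := by
      have := congrArg Prod.snd hpx; simpa [π] using this
    ext
    simp [chain_zero hH hx' h0 h1]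
  calc Module.finrank ℂ (LinearMap.ker H.mulVecLin)
      ≤ Module.finrank ℂ (ℂ × ℂ) := LinearMap.finrank_le_finrank_of_injective hinj
    _ = 2 := by simp

omit hH in
lemma rank_eq_sub_ker : H.rank = (n+3) - Module.finrank ℂ (LinearMap.ker H.mulVecLin) := by
  have := LinearMap.finrank_range_add_finrank_ker H.mulVecLin
  rw [Module.finrank_pi] at this
  simp only [Fintype.card_fin] at this
  rw [Matrix.rank]
  omega

lemma rank_lower : n + 1 ≤ H.rank := by
  have := finrank_ker_le_two hH
  rw [rank_eq_sub_ker]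
  omega

end Cycle2

noncomputable section CycleProd

def AF (n : ℕ) (H : Matrix (Fin (n+3)) (Fin (n+3)) ℂ) (t : ℕ) : ℂ :=
  H (t : Fin (n+3)) ((t : Fin (n+3)) + 1)

def wE (n : ℕ) (H : Matrix (Fin (n+3)) (Fin (n+3)) ℂ) (k : ℕ) : ℂ :=
  ∏ t ∈ Finset.range k, -((starRingEnd ℂ) (AF n H (2*t) * AF n H (2*t+1)))

def wO (n : ℕ) (H : Matrix (Fin (n+3)) (Fin (n+3)) ℂ) (k : ℕ) : ℂ :=
  ∏ t ∈ Finset.range k, -((starRingEnd ℂ) (AF n H (2*t+1) * AF n H (2*t+2)))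

variable {n : ℕ} {H : Matrix (Fin (n+3)) (Fin (n+3)) ℂ}

lemma wE_eq (k : ℕ) : wE n H k =
    (-1)^k * (starRingEnd ℂ) (∏ s ∈ Finset.range (2*k), AF n H s) := by
  induction k with
  | zero => simp [wE]
  | succ k ih =>
    rw [wE, Finset.prod_range_succ, ← wE, ih, show 2*(k+1) = (2*k+1)+1 by ring,
      Finset.prod_range_succ, Finset.prod_range_succ]
    simp only [_root_.map_mul]
    ring

lemma wO_eq (k : ℕ) : wO n H k =
    (-1)^k * (starRingEnd ℂ) (∏ s ∈ Finset.range (2*k), AF n H (s+1)) := by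
  induction k with
  | zero => simp [wO]
  | succ k ih =>
    rw [wO, Finset.prod_range_succ, ← wO, ih, show 2*(k+1) = (2*k+1)+1 by ring,
      Finset.prod_range_succ, Finset.prod_range_succ]
    simp only [_root_.map_mul]
    ring

lemma prodAF_all : ∏ s ∈ Finset.range (n+3), AF n H s = ∏ i : Fin (n+3), H i (i+1) := by
  rw [← Fin.prod_univ_eq_prod_range (fun s => AF n H s) (n+3)]
  apply Finset.prod_congr rfl
  intro i _
  simp [AF]

lemma prodAF_shift : ∏ s ∈ Finset.range (n+3), AF n H (s+1) = ∏ i : Fin (n+3), H i (i+1) := by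
  rw [← Fin.prod_univ_eq_prod_range (fun s => AF n H (s+1)) (n+3)]
  have : ∀ i : Fin (n+3), AF n H (i.val + 1) = H (i+1) ((i+1)+1) := by
    intro i
    have : ((i.val + 1 : ℕ) : Fin (n+3)) = i + 1 := by push_cast; simp
    simp [AF, this]
  rw [Finset.prod_congr rfl (fun i _ => this i)]
  exact Equiv.prod_comp (Equiv.addRight (1 : Fin (n+3))) (fun i => H i (i+1))

end CycleProd

section CycleKer
variable {n : ℕ} {H : Matrix (Fin (n+3)) (Fin (n+3)) ℂ}

lemma AF_def (t : ℕ) : AF n H t = H (t : Fin (n+3)) ((t : Fin (n+3)) + 1) := rfl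

lemma AF_per (t : ℕ) : AF n H (t + (n+3)) = AF n H t := by
  have : ((t + (n+3) : ℕ) : Fin (n+3)) = (t : Fin (n+3)) := by
    rw [Nat.cast_add, Fin.natCast_self, add_zero]
  rw [AF_def, AF_def, this]

variable (hH : IsUnitGain (SimpleGraph.cycleGraph (n+3)) H)
include hH

lemma cm_AF (t : ℕ) : (starRingEnd ℂ) (AF n H t) * AF n H t = 1 :=
  conj_mul_self hH ((t : Fin (n+3)))

lemma row_nat {x : Fin (n+3) → ℂ} (hx : H *ᵥ x = 0) (t : ℕ) :
    AF n H (t+1) * x (((t+2 : ℕ)) : Fin (n+3)) =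
      -((starRingEnd ℂ) (AF n H t) * x ((t : ℕ) : Fin (n+3))) := by
  have hrow := row_eq hH x ((t+1 : ℕ) : Fin (n+3))
  rw [hx] at hrow
  simp only [Pi.zero_apply] at hrow
  have e1 : ((t+1 : ℕ) : Fin (n+3)) - 1 = (t : Fin (n+3)) := by push_cast; ring
  have e2 : ((t+1 : ℕ) : Fin (n+3)) + 1 = ((t+2 : ℕ) : Fin (n+3)) := by push_cast; ring
  rw [e1, e2] at hrow
  have e3 : AF n H (t+1) = H ((t+1 : ℕ) : Fin (n+3)) ((t+2 : ℕ) : Fin (n+3)) := by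
    rw [AF_def, e2]
  rw [e3, AF_def t]
  linear_combination -hrow

lemma ker_even {x : Fin (n+3) → ℂ} (hx : H *ᵥ x = 0) :
    ∀ k : ℕ, x ((2*k : ℕ) : Fin (n+3)) = wE n H k * x 0 := by
  intro k
  induction k with
  | zero => simp [wE]
  | succ k ih =>
    have h1 := row_nat hH hx (2*k)
    have h2 := cm_AF hH (2*k+1)
    have e : (2*k+2 : ℕ) = 2*(k+1) := by ring
    rw [e] at h1
    rw [ih] at h1
    rw [wE, Finset.prod_range_succ, ← wE, _root_.map_mul]
    linear_combination (starRingEnd ℂ) (AF n H (2*k+1)) * h1 -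
      (x ((2*(k+1) : ℕ) : Fin (n+3))) * h2
    
lemma ker_odd {x : Fin (n+3) → ℂ} (hx : H *ᵥ x = 0) :
    ∀ k : ℕ, x ((2*k+1 : ℕ) : Fin (n+3)) = wO n H k * x 1 := by
  intro k
  induction k with
  | zero => simp [wO]
  | succ k ih =>
    have h1 := row_nat hH hx (2*k+1)
    have h2 := cm_AF hH (2*k+2)
    have e : (2*k+1+2 : ℕ) = 2*(k+1)+1 := by ring
    rw [e] at h1
    rw [ih] at h1
    rw [wO, Finset.prod_range_succ, ← wO, _root_.map_mul]
    linear_combination (starRingEnd ℂ) (AF n H (2*k+2)) * h1 -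
      (x ((2*(k+1)+1 : ℕ) : Fin (n+3))) * h2

end CycleKer

noncomputable section CycleVec

lemma prod_range_per {f : ℕ → ℂ} {m : ℕ} (hm : 0 < m) (hf : ∀ s, f (s+m) = f s)
    (h1 : ∏ s ∈ Finset.range m, f s = 1) :
    ∀ t, ∏ s ∈ Finset.range t, f s = ∏ s ∈ Finset.range (t % m), f s := by
  intro t
  induction t using Nat.strong_induction_on with
  | _ t ih =>
    by_cases ht : t < m
    · rw [Nat.mod_eq_of_lt ht]
    · push_neg at ht
      have e : t = m + (t - m) := by omega
      nth_rewrite 1 [e]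
      rw [Finset.prod_range_add, h1, one_mul]
      have : ∀ s ∈ Finset.range (t - m), f (m + s) = f s := by
        intro s _; rw [add_comm]; exact hf s
      rw [Finset.prod_congr rfl this, ih (t - m) (by omega),
        (Nat.mod_eq_sub_mod ht).symm]

def vE (n : ℕ) (H : Matrix (Fin (n+3)) (Fin (n+3)) ℂ) : Fin (n+3) → ℂ :=
  fun j => if 2 ∣ j.val then wE n H (j.val / 2) else 0

def vO (n : ℕ) (H : Matrix (Fin (n+3)) (Fin (n+3)) ℂ) : Fin (n+3) → ℂ :=
  fun j => if 2 ∣ j.val then 0 else wO n H (j.val / 2)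

variable {n m : ℕ} {H : Matrix (Fin (n+3)) (Fin (n+3)) ℂ}

lemma wE_per (hm : n+3 = 2*m) (h1 : wE n H m = 1) (t : ℕ) :
    wE n H t = wE n H (t % m) := by
  apply prod_range_per (by omega) _ h1 t
  intro s
  rw [show 2*(s+m) = 2*s + (n+3) by omega]
  rw [show 2*s+(n+3)+1 = (2*s+1) + (n+3) by omega]
  rw [AF_per, AF_per]

lemma wO_per (hm : n+3 = 2*m) (h1 : wO n H m = 1) (t : ℕ) :
    wO n H t = wO n H (t % m) := by
  apply prod_range_per (by omega) _ h1 t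
  intro s
  rw [show 2*(s+m)+1 = (2*s+1) + (n+3) by omega]
  rw [show 2*(s+m)+2 = (2*s+2) + (n+3) by omega]
  rw [AF_per, AF_per]

lemma val_cast_mod (t : ℕ) : ((t : Fin (n+3))).val = t % (n+3) := by
  simp [Fin.val_natCast]

lemma vE_even (hm : n+3 = 2*m) (h1 : wE n H m = 1) (t : ℕ) :
    vE n H ((2*t : ℕ) : Fin (n+3)) = wE n H t := by
  have hv : ((2*t : ℕ) : Fin (n+3)).val = 2 * (t % m) := by
    rw [val_cast_mod, hm, Nat.mul_mod_mul_left]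
  rw [vE, hv]
  simp only [Nat.mul_div_cancel_left _ (by norm_num : 0 < 2), dvd_mul_right, if_true]
  exact (wE_per hm h1 t).symm

lemma vE_odd (hm : n+3 = 2*m) (t : ℕ) :
    vE n H ((2*t+1 : ℕ) : Fin (n+3)) = 0 := by
  have hv : ((2*t+1 : ℕ) : Fin (n+3)).val % 2 = 1 := by
    rw [val_cast_mod, hm, Nat.mod_mod_of_dvd _ ⟨m, rfl⟩]
    omega
  have : ¬ (2 ∣ ((2*t+1 : ℕ) : Fin (n+3)).val) := by omega
  rw [vE]
  exact if_neg this

lemma vO_even (hm : n+3 = 2*m) (t : ℕ) :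
    vO n H ((2*t : ℕ) : Fin (n+3)) = 0 := by
  have hv : ((2*t : ℕ) : Fin (n+3)).val = 2 * (t % m) := by
    rw [val_cast_mod, hm, Nat.mul_mod_mul_left]
  rw [vO, hv]
  simp

lemma vO_odd (hm : n+3 = 2*m) (h1 : wO n H m = 1) (t : ℕ) :
    vO n H ((2*t+1 : ℕ) : Fin (n+3)) = wO n H t := by
  have hv : ((2*t+1 : ℕ) : Fin (n+3)).val = 2 * (t % m) + 1 := by
    rw [val_cast_mod, hm]
    have hd := Nat.div_add_mod t m
    have key : 2*t+1 = 2*m*(t/m) + (2*(t%m)+1) := by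
      calc 2*t+1 = 2*(m*(t/m)+(t%m)) + 1 := by rw [hd]
      _ = 2*m*(t/m) + (2*(t%m)+1) := by ring
    rw [key, Nat.mul_add_mod]
    have : t % m < m := Nat.mod_lt t (by omega)
    exact Nat.mod_eq_of_lt (by omega)
  rw [vO, hv]
  have h2 : ¬ (2 ∣ (2 * (t % m) + 1)) := by omega
  simp only [h2, if_false]
  rw [show (2 * (t % m) + 1) / 2 = t % m by omega]
  exact (wO_per hm h1 t).symm

end CycleVec

section CycleKer2
variable {n m : ℕ} {H : Matrix (Fin (n+3)) (Fin (n+3)) ℂ}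

lemma wEm_eq (hm : n+3 = 2*m) :
    wE n H m = (-1)^m * (starRingEnd ℂ) (∏ i : Fin (n+3), H i (i+1)) := by
  rw [wE_eq, ← prodAF_all (n := n) (H := H), ← hm]

lemma wOm_eq (hm : n+3 = 2*m) :
    wO n H m = (-1)^m * (starRingEnd ℂ) (∏ i : Fin (n+3), H i (i+1)) := by
  rw [wO_eq, ← prodAF_shift (n := n) (H := H), ← hm]

lemma wEm_one (hm : n+3 = 2*m) (hφ : ∏ i : Fin (n+3), H i (i+1) = (-1)^m) :
    wE n H m = 1 := by
  rw [wEm_eq hm, hφ]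
  rw [show (starRingEnd ℂ) ((-1 : ℂ)^m) = (-1)^m by rw [map_pow]; norm_num]
  rw [← mul_pow]; norm_num

lemma wOm_one (hm : n+3 = 2*m) (hφ : ∏ i : Fin (n+3), H i (i+1) = (-1)^m) :
    wO n H m = 1 := by
  rw [wOm_eq hm, hφ]
  rw [show (starRingEnd ℂ) ((-1 : ℂ)^m) = (-1)^m by rw [map_pow]; norm_num]
  rw [← mul_pow]; norm_num

variable (hH : IsUnitGain (SimpleGraph.cycleGraph (n+3)) H)
include hH

lemma row_vec (v : Fin (n+3) → ℂ) (t : ℕ) :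
    (H *ᵥ v) (((t+1 : ℕ)) : Fin (n+3)) =
      (starRingEnd ℂ) (AF n H t) * v ((t : ℕ) : Fin (n+3)) +
        AF n H (t+1) * v ((t+2 : ℕ) : Fin (n+3)) := by
  have hrow := row_eq hH v ((t+1 : ℕ) : Fin (n+3))
  have e1 : ((t+1 : ℕ) : Fin (n+3)) - 1 = (t : Fin (n+3)) := by push_cast; ring
  have e2 : ((t+1 : ℕ) : Fin (n+3)) + 1 = ((t+2 : ℕ) : Fin (n+3)) := by push_cast; ring
  rw [e1, e2] at hrow
  rw [hrow, AF_def t, AF_def (t+1), e2]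

lemma vE_ker (hm : n+3 = 2*m) (hφ : ∏ i : Fin (n+3), H i (i+1) = (-1)^m) :
    H *ᵥ vE n H = 0 := by
  have h1 := wEm_one hm hφ
  have claim : ∀ t : ℕ, (H *ᵥ vE n H) (((t+1 : ℕ)) : Fin (n+3)) = 0 := by
    intro t
    rw [row_vec hH]
    rcases Nat.even_or_odd t with ⟨s, hs⟩ | ⟨s, hs⟩
    · -- t = 2s even
      subst hs
      rw [show s + s = 2*s by ring] at *
      rw [vE_even hm h1 s, show 2*s+2 = 2*(s+1) by ring, vE_even hm h1 (s+1)]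
      rw [show wE n H (s+1) = wE n H s *
        -((starRingEnd ℂ) (AF n H (2*s)) * (starRingEnd ℂ) (AF n H (2*s+1))) from by
          rw [wE, Finset.prod_range_succ, ← wE, _root_.map_mul]]
      have cm := cm_AF hH (2*s+1)
      linear_combination (-((starRingEnd ℂ) (AF n H (2*s)) * wE n H s)) * cm
    · -- t = 2s+1 odd
      subst hs
      rw [vE_odd hm s, show 2*s+1+2 = 2*(s+1)+1 by ring, vE_odd hm (s+1)]
      ring
  funext i
  have hi : ((i.val + (n+2) + 1 : ℕ) : Fin (n+3)) = i := by
    rw [show i.val + (n+2) + 1 = i.val + (n+3) by ring, Nat.cast_add,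
      Fin.natCast_self, add_zero, Fin.cast_val_eq_self]
  have := claim (i.val + (n+2))
  rw [hi] at this
  simpa using this

lemma vO_ker (hm : n+3 = 2*m) (hφ : ∏ i : Fin (n+3), H i (i+1) = (-1)^m) :
    H *ᵥ vO n H = 0 := by
  have h1 := wOm_one hm hφ
  have claim : ∀ t : ℕ, (H *ᵥ vO n H) (((t+1 : ℕ)) : Fin (n+3)) = 0 := by
    intro t
    rw [row_vec hH]
    rcases Nat.even_or_odd t with ⟨s, hs⟩ | ⟨s, hs⟩
    · subst hs
      rw [show s + s = 2*s by ring] at *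
      rw [vO_even hm s, show 2*s+2 = 2*(s+1) by ring, vO_even hm (s+1)]
      ring
    · subst hs
      rw [vO_odd hm h1 s, show 2*s+1+2 = 2*(s+1)+1 by ring, vO_odd hm h1 (s+1)]
      rw [show wO n H (s+1) = wO n H s *
        -((starRingEnd ℂ) (AF n H (2*s+1)) * (starRingEnd ℂ) (AF n H (2*s+2))) from by
          rw [wO, Finset.prod_range_succ, ← wO, _root_.map_mul]]
      have cm := cm_AF hH (2*s+2)
      linear_combination (-((starRingEnd ℂ) (AF n H (2*s+1)) * wO n H s)) * cm
  funext i
  have hi : ((i.val + (n+2) + 1 : ℕ) : Fin (n+3)) = i := by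
    rw [show i.val + (n+2) + 1 = i.val + (n+3) by ring, Nat.cast_add,
      Fin.natCast_self, add_zero, Fin.cast_val_eq_self]
  have := claim (i.val + (n+2))
  rw [hi] at this
  simpa using this

end CycleKer2

section CycleRank
variable {n m : ℕ} {H : Matrix (Fin (n+3)) (Fin (n+3)) ℂ}
lemma conj_neg_one_pow (m : ℕ) : (starRingEnd ℂ) ((-1 : ℂ)^m) = (-1)^m := by
  rw [map_pow]; norm_num

lemma vE_zero : vE n H 0 = 1 := by
  have : (0 : Fin (n+3)).val = 0 := rfl
  simp [vE, this, wE]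

lemma vE_one : vE n H 1 = 0 := by
  have h1 : (1 : Fin (n+3)).val = 1 := by
    rw [Fin.val_one]
  rw [vE, h1]
  norm_num

lemma vO_zero : vO n H 0 = 0 := by
  have : (0 : Fin (n+3)).val = 0 := rfl
  simp [vO, this]

lemma vO_one : vO n H 1 = 1 := by
  have h1 : (1 : Fin (n+3)).val = 1 := by rw [Fin.val_one]
  rw [vO, h1]
  norm_num [wO]

variable (hH : IsUnitGain (SimpleGraph.cycleGraph (n+3)) H)
include hH

lemma rank_even_good (hm : n+3 = 2*m)
    (hφ : ∏ i : Fin (n+3), H i (i+1) = (-1)^m) : H.rank = n+1 := by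
  have hkle := finrank_ker_le_two hH
  have hEmem : vE n H ∈ LinearMap.ker H.mulVecLin := by
    rw [LinearMap.mem_ker, Matrix.mulVecLin_apply, vE_ker hH hm hφ]
  have hOmem : vO n H ∈ LinearMap.ker H.mulVecLin := by
    rw [LinearMap.mem_ker, Matrix.mulVecLin_apply, vO_ker hH hm hφ]
  have hli : LinearIndependent ℂ ![vE n H, vO n H] := by
    rw [LinearIndependent.pair_iff' (x := vE n H) (y := vO n H) ?hne]
    · intro a ha
      have := congrFun ha 1
      rw [Pi.smul_apply, vE_one, vO_one, smul_zero] at this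
      exact one_ne_zero this.symm
    · intro h
      have := congrFun h 0
      rw [vE_zero] at this
      exact one_ne_zero this
  have hge : 2 ≤ Module.finrank ℂ (LinearMap.ker H.mulVecLin) := by
    have hsp : Submodule.span ℂ (Set.range ![vE n H, vO n H]) ≤
        LinearMap.ker H.mulVecLin := by
      rw [Submodule.span_le]
      rintro x ⟨i, rfl⟩
      fin_cases i
      · exact hEmem
      · exact hOmem
    have := finrank_span_eq_card hli
    calc (2 : ℕ) = Module.finrank ℂ (Submodule.span ℂ (Set.range ![vE n H, vO n H])) := by
          rw [this]; simp
      _ ≤ Module.finrank ℂ (LinearMap.ker H.mulVecLin) := Submodule.finrank_mono hsp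
  have h2 : Module.finrank ℂ (LinearMap.ker H.mulVecLin) = 2 := le_antisymm hkle hge
  rw [rank_eq_sub_ker, h2]
  omega

lemma rank_even_bad (hm : n+3 = 2*m)
    (hφ : ∏ i : Fin (n+3), H i (i+1) ≠ (-1)^m) : H.rank = n+3 := by
  have hwne : wE n H m ≠ 1 := by
    intro h
    apply hφ
    have he := wEm_eq (H := H) hm
    rw [h] at he
    have hsq : ((-1 : ℂ))^m * (-1)^m = 1 := by rw [← mul_pow]; norm_num
    have hc : (starRingEnd ℂ) (∏ i : Fin (n+3), H i (i+1)) = (-1)^m := by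
      linear_combination (-((-1:ℂ)^m)) * he +
        (-(starRingEnd ℂ) (∏ i : Fin (n+3), H i (i+1))) * hsq
    have := congrArg (starRingEnd ℂ) hc
    rwa [Complex.conj_conj, conj_neg_one_pow] at this
  have hwne' : wO n H m ≠ 1 := by
    rw [wOm_eq hm, ← wEm_eq hm]
    exact hwne
  have hker : LinearMap.ker H.mulVecLin = ⊥ := by
    rw [LinearMap.ker_eq_bot']
    intro x hx
    have hx' : H *ᵥ x = 0 := hx
    have h0 : x 0 = 0 := by
      have hke := ker_even hH hx' m
      have e0 : ((2*m : ℕ) : Fin (n+3)) = 0 := by rw [← hm, Fin.natCast_self]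
      rw [e0] at hke
      have : x 0 * (wE n H m - 1) = 0 := by linear_combination -hke
      rcases mul_eq_zero.mp this with h | h
      · exact h
      · exact absurd (by linear_combination h) hwne
    have h1 : x 1 = 0 := by
      have hko := ker_odd hH hx' m
      have e1 : ((2*m+1 : ℕ) : Fin (n+3)) = 1 := by
        rw [← hm, Nat.cast_add, Fin.natCast_self, Nat.cast_one, zero_add]
      rw [e1] at hko
      have : x 1 * (wO n H m - 1) = 0 := by linear_combination -hko
      rcases mul_eq_zero.mp this with h | h
      · exact h
      · exact absurd (by linear_combination h) hwne'
    exact chain_zero hH hx' h0 h1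
  rw [rank_eq_sub_ker, hker]
  simp

end CycleRank

section GraphSide

open SimpleGraph

lemma matching_count {N : ℕ} {G : SimpleGraph (Fin N)} {M : G.Subgraph}
    (hM : M.IsMatching) : M.verts.ncard = 2 * M.edgeSet.ncard := by
  classical
  have hvfin : M.verts.Finite := Set.toFinite _
  have hefin : M.edgeSet.Finite := Set.toFinite _
  rw [Set.ncard_eq_toFinset_card _ hvfin, Set.ncard_eq_toFinset_card _ hefin]
  set vs := hvfin.toFinset with hvs
  set es := hefin.toFinset with hes
  let F : Fin N → Sym2 (Fin N) := fun v =>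
    if h : v ∈ M.verts then (hM.toEdge ⟨v, h⟩ : Sym2 (Fin N)) else s(v, v)
  have hmap : ∀ v ∈ vs, F v ∈ es := by
    intro v hv
    rw [hvs, Set.Finite.mem_toFinset] at hv
    rw [hes, Set.Finite.mem_toFinset]
    simp only [F, dif_pos hv]
    exact (hM.toEdge ⟨v, hv⟩).2
  rw [Finset.card_eq_sum_card_fiberwise hmap]
  have hfib : ∀ b ∈ es, (vs.filter (fun v => F v = b)).card = 2 := by
    intro b hb
    rw [hes, Set.Finite.mem_toFinset] at hb
    induction b using Sym2.ind with
    | _ x y =>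
      have hadj : M.Adj x y := SimpleGraph.Subgraph.mem_edgeSet.mp hb
      have hxy : x ≠ y := (M.adj_sub hadj).ne
      have hfe : vs.filter (fun v => F v = s(x,y)) = {x, y} := by
        ext v
        simp only [Finset.mem_filter, Finset.mem_insert, Finset.mem_singleton, hvs,
          Set.Finite.mem_toFinset]
        constructor
        · rintro ⟨hv, hFv⟩
          simp only [F, dif_pos hv] at hFv
          obtain ⟨w, hw⟩ := hM hv
          have := hM.toEdge_eq_of_adj hw.1
          rw [this] at hFv
          have hvmem : v ∈ s(x, y) := by
            rw [← hFv]
            exact Sym2.mem_mk_left v w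
          rwa [Sym2.mem_iff] at hvmem
        · rintro (rfl | rfl)
          · refine ⟨M.edge_vert hadj, ?_⟩
            simp only [F, dif_pos (M.edge_vert hadj)]
            rw [hM.toEdge_eq_of_adj hadj]
          · refine ⟨M.edge_vert hadj.symm, ?_⟩
            simp only [F, dif_pos (M.edge_vert hadj.symm)]
            rw [hM.toEdge_eq_of_adj hadj.symm]
            exact Sym2.eq_swap
      rw [hfe, Finset.card_pair hxy]
  rw [Finset.sum_congr rfl hfib, Finset.sum_const, smul_eq_mul, mul_comm]

lemma matchNum_le {N : ℕ} (G : SimpleGraph (Fin N)) : matchNum G ≤ N / 2 := by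
  apply csSup_le
  · exact ⟨0, ⊥, fun v hv => absurd hv (by simp), by simp⟩
  · rintro k ⟨M, hM, rfl⟩
    have h1 := matching_count hM
    have h2 : M.verts.ncard ≤ N := by
      have := Set.ncard_le_ncard (Set.subset_univ M.verts) Set.finite_univ
      rwa [Set.ncard_univ, Nat.card_eq_fintype_card, Fintype.card_fin] at this
    omega

end GraphSide

section GraphSide2
open SimpleGraph

lemma matchNum_cycle_even {n m : ℕ} (hm : n + 3 = 2 * m) :
    matchNum (SimpleGraph.cycleGraph (n+3)) = m := by
  classical
  set G := SimpleGraph.cycleGraph (n+3) with hG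
  have hmem : ∃ M : G.Subgraph, M.IsMatching ∧ M.edgeSet.ncard = m := by
    set s : Set (Fin (n+3)) := {v | v.val % 2 = 0} with hs
    set t : Set (Fin (n+3)) := {v | v.val % 2 = 1} with ht
    have hdisj : Disjoint s t := by
      rw [Set.disjoint_left]
      intro v hv hv'
      simp only [hs, ht, Set.mem_setOf_eq] at hv hv'
      omega
    have hlt : ∀ v : s, (v : Fin (n+3)).val + 1 < n + 3 := by
      intro v
      have h2 : (v : Fin (n+3)).val % 2 = 0 := v.2
      have h3 := (v : Fin (n+3)).isLt
      omega
    have hge : ∀ w : t, 1 ≤ (w : Fin (n+3)).val := by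
      intro w
      have h2 : (w : Fin (n+3)).val % 2 = 1 := w.2
      omega
    let f : s ≃ t :=
      { toFun := fun v => ⟨⟨(v : Fin (n+3)).val + 1, hlt v⟩, by
          have hv := v.2
          simp only [hs, Set.mem_setOf_eq] at hv
          simp only [ht, Set.mem_setOf_eq]
          omega⟩
        invFun := fun w => ⟨⟨(w : Fin (n+3)).val - 1, by
          have := (w : Fin (n+3)).isLt; omega⟩, by
          have hw := w.2
          simp only [ht, Set.mem_setOf_eq] at hw
          simp only [hs, Set.mem_setOf_eq]
          have h1 : 1 ≤ (w : Fin (n+3)).val := hge w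
          omega⟩
        left_inv := by
          rintro ⟨v, hv⟩
          apply Subtype.ext
          apply Fin.ext
          simp
        right_inv := by
          rintro ⟨w, hw⟩
          have h1 : 1 ≤ w.val := hge ⟨w, hw⟩
          apply Subtype.ext
          apply Fin.ext
          show (w.val - 1) + 1 = w.val
          omega }
    have hadj : ∀ v : s, G.Adj v (f v) := by
      intro v
      have : (f v : Fin (n+3)) = (v : Fin (n+3)) + 1 := by
        apply Fin.ext
        rw [Fin.val_add_one_of_lt]
        · rfl
        · rw [Fin.lt_iff_val_lt_val]
          have := hlt v
          simp only [Fin.val_last]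
          omega
      rw [this, hG, cyc_adj_iff]
      right
      rfl
    obtain ⟨M, hMv, hMm⟩ := Subgraph.IsMatching.exists_of_disjoint_sets_of_equiv hdisj f hadj
    refine ⟨M, hMm, ?_⟩
    have hverts : M.verts = Set.univ := by
      rw [hMv]
      ext v
      simp only [Set.mem_union, hs, ht, Set.mem_setOf_eq, Set.mem_univ, iff_true]
      omega
    have := matching_count hMm
    rw [hverts, Set.ncard_univ, Nat.card_eq_fintype_card, Fintype.card_fin] at this
    omega
  apply le_antisymm
  · have := matchNum_le G
    omega
  · exact le_csSup ⟨(n+3)/2, by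
      rintro k ⟨M, hM, rfl⟩
      have h1 := matching_count hM
      have h2 : M.verts.ncard ≤ n+3 := by
        have := Set.ncard_le_ncard (Set.subset_univ M.verts) Set.finite_univ
        rwa [Set.ncard_univ, Nat.card_eq_fintype_card, Fintype.card_fin] at this
      omega⟩ hmem

lemma cycNum_cycle {n : ℕ} : cycNum (SimpleGraph.cycleGraph (n+3)) = 1 := by
  classical
  set G := SimpleGraph.cycleGraph (n+3) with hG
  have hedge : G.edgeSet.ncard = n + 3 := by
    have hsum := SimpleGraph.sum_degrees_eq_twice_card_edges G
    have hdeg : ∀ v : Fin (n+3), G.degree v = 2 := fun v =>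
      SimpleGraph.cycleGraph_degree_three_le
    rw [Finset.sum_congr rfl (fun v _ => hdeg v), Finset.sum_const] at hsum
    simp only [Finset.card_univ, Fintype.card_fin, smul_eq_mul] at hsum
    have hcard : G.edgeFinset.card = n + 3 := by omega
    rw [Set.ncard_eq_toFinset_card']
    exact hcard
  have hcomp : Nat.card G.ConnectedComponent = 1 := by
    rw [Nat.card_eq_one_iff_unique]
    constructor
    · constructor
      intro a b
      obtain ⟨u, rfl⟩ := a.exists_rep
      obtain ⟨v, rfl⟩ := b.exists_rep
      exact SimpleGraph.ConnectedComponent.sound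
        (SimpleGraph.cycleGraph_preconnected u v)
    · exact ⟨SimpleGraph.connectedComponentMk G 0⟩
  rw [cycNum, hedge, hcomp, Nat.card_eq_fintype_card, Fintype.card_fin]
  push_cast
  ring

end GraphSide2


/-- **Lemma.** A complex unit gain cycle `(C_q, H)` of length `q ≥ 3` satisfies
`rank(H) = 2m(C_q) - 2c(C_q)` iff `q` is even and the gain
`∏ i, H i (i+1)` of the cycle (here `i + 1` is taken cyclically, via `finRotate`)
equals `(-1)^(q/2)`. -/
theorem cycle_lower_optimal_iff (q : ℕ) (hq : 3 ≤ q)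
    (H : Matrix (Fin q) (Fin q) ℂ)
    (hH : IsUnitGain (SimpleGraph.cycleGraph q) H) :
    (H.rank : ℤ) = 2 * (matchNum (SimpleGraph.cycleGraph q) : ℤ) -
        2 * cycNum (SimpleGraph.cycleGraph q) ↔
      Even q ∧ ∏ i : Fin q, H i (finRotate q i) = (-1 : ℂ) ^ (q / 2) := by
  obtain ⟨n, rfl⟩ : ∃ n, q = n + 3 := ⟨q - 3, by omega⟩
  have hcyc : cycNum (SimpleGraph.cycleGraph (n+3)) = 1 := cycNum_cycle
  have hrot : ∏ i : Fin (n+3), H i (finRotate (n+3) i) = ∏ i : Fin (n+3), H i (i+1) := by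
    apply Finset.prod_congr rfl
    intro i _
    rw [show finRotate (n+3) i = i + 1 from finRotate_succ_apply i]
  rw [hcyc, hrot]
  rcases Nat.even_or_odd (n+3) with he | ho
  · obtain ⟨m, hm⟩ := he
    have hm' : n + 3 = 2 * m := by omega
    have hmatch := matchNum_cycle_even hm'
    have hq2 : (n+3)/2 = m := by omega
    rw [hmatch, hq2]
    by_cases hφ : ∏ i : Fin (n+3), H i (i+1) = (-1 : ℂ)^m
    · rw [rank_even_good hH hm' hφ]
      constructor
      · intro _
        exact ⟨⟨m, hm⟩, hφ⟩
      · intro _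
        omega
    · rw [rank_even_bad hH hm' hφ]
      constructor
      · intro hL
        exfalso
        omega
      · rintro ⟨_, h⟩
        exact absurd h hφ
  · have hrank := rank_lower hH
    have hmle := matchNum_le (SimpleGraph.cycleGraph (n+3))
    constructor
    · intro hL
      exfalso
      obtain ⟨k, hk⟩ := ho
      have hq2 : (n+3)/2 = k + 1 := by omega
      omega
    · rintro ⟨he, _⟩
      exact absurd he (by simpa using Nat.not_even_iff_odd.mpr ho)
end

section
/- Let (G, H) be a complex unit gain graph whose underlying graph G is connected, has no vertex of degree 1, and has cyclomatic number c(G) ≥ 2. Then rank(H) < 2m(G) + c(G). -/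
open SimpleGraph

section Aux

variable {V : Type*}

/-- Restriction of `G` to vertex set `s`, as a graph on the same vertex type. -/
def Gr (G : SimpleGraph V) (s : Set V) : SimpleGraph V where
  Adj x y := x ∈ s ∧ y ∈ s ∧ G.Adj x y
  symm := ⟨fun x y ⟨hx, hy, h⟩ => ⟨hy, hx, h.symm⟩⟩
  loopless := ⟨fun x ⟨_, _, h⟩ => G.loopless.irrefl x h⟩

lemma Gr_le (G : SimpleGraph V) (s : Set V) : Gr G s ≤ G := fun _ _ h => h.2.2

lemma Gr_mono (G : SimpleGraph V) {s t : Set V} (h : s ⊆ t) : Gr G s ≤ Gr G t :=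
  fun _ _ ⟨hx, hy, ha⟩ => ⟨h hx, h hy, ha⟩

lemma Gr_univ (G : SimpleGraph V) : Gr G Set.univ = G := by
  ext x y; simp [Gr]

lemma Gr_adj {G : SimpleGraph V} {s : Set V} {x y : V} :
    (Gr G s).Adj x y ↔ x ∈ s ∧ y ∈ s ∧ G.Adj x y := Iff.rfl

lemma Gr_walk_support {G : SimpleGraph V} {s : Set V} {a b : V} (p : (Gr G s).Walk a b) :
    ∀ z ∈ p.support, z = a ∨ z ∈ s := by
  induction p with
  | nil => intro z hz; left; simpa using hz
  | cons h q ih =>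
    intro z hz
    rcases List.mem_cons.mp (by simpa using hz) with rfl | hz'
    · left; rfl
    · right; rcases ih z hz' with rfl | hzs
      · exact h.2.1
      · exact hzs

/-- The connected component of `x` within the restriction of `G` to `s`. -/
def comp (G : SimpleGraph V) (s : Set V) (x : V) : Set V :=
  {y | y ∈ s ∧ (Gr G s).Reachable x y}

lemma comp_subset (G : SimpleGraph V) (s : Set V) (x : V) : comp G s x ⊆ s :=
  fun _ h => h.1

lemma mem_comp_self {G : SimpleGraph V} {s : Set V} {x : V} (hx : x ∈ s) :
    x ∈ comp G s x := ⟨hx, Reachable.refl x⟩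

lemma comp_eq_of_mem {G : SimpleGraph V} {s : Set V} {x y : V} (hy : y ∈ comp G s x) :
    comp G s y = comp G s x := by
  ext z
  exact ⟨fun hz => ⟨hz.1, hy.2.trans hz.2⟩, fun hz => ⟨hz.1, hy.2.symm.trans hz.2⟩⟩

lemma comp_adj_closed {G : SimpleGraph V} {s : Set V} {x y z : V} (hy : y ∈ comp G s x)
    (h : (Gr G s).Adj y z) : z ∈ comp G s x :=
  ⟨h.2.1, hy.2.trans h.reachable⟩

/-- A walk in `Gr G s` starting inside a component stays inside, and witnesses
reachability within the component's own restricted graph. -/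
lemma comp_reach {G : SimpleGraph V} {s : Set V} {x a b : V} (ha : a ∈ comp G s x)
    (p : (Gr G s).Walk a b) : (Gr G (comp G s x)).Reachable a b := by
  induction p with
  | nil => exact Reachable.refl _
  | @cons u v w h q ih =>
    have hv : v ∈ comp G s x := comp_adj_closed ha h
    have hadj : (Gr G (comp G s x)).Adj u v := ⟨ha, hv, h.2.2⟩
    exact hadj.reachable.trans (ih hv)

lemma comp_reach' {G : SimpleGraph V} {s : Set V} {x a b : V} (ha : a ∈ comp G s x)
    (hb : b ∈ comp G s x) : (Gr G (comp G s x)).Reachable a b := by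
  have : (Gr G s).Reachable a b := ha.2.symm.trans hb.2
  obtain ⟨p⟩ := this
  exact comp_reach ha p

lemma no_cycle_attach {G : SimpleGraph V} {s : Set V} (ha : (Gr G s).IsAcyclic)
    {v a b : V} (hab : a ≠ b) (h1 : (Gr G s).Adj v a) (h2 : (Gr G s).Adj v b)
    (hr : (Gr G (s \ {v})).Reachable a b) : False := by
  haveI := Classical.decEq V
  obtain ⟨p0⟩ := hr
  have hp1path : p0.bypass.IsPath := p0.bypass_isPath
  have hvsup : v ∉ p0.bypass.support := by
    intro hv
    rcases Gr_walk_support p0.bypass v hv with rfl | hvs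
    · exact h1.ne rfl
    · exact hvs.2 rfl
  let p : (Gr G s).Walk a b := p0.bypass.mapLe (Gr_mono G Set.diff_subset)
  have hppath : p.IsPath := hp1path.mapLe _
  have hsupp : p.support = p0.bypass.support := by
    simp only [p, Walk.mapLe, Walk.support_map]
    have : ⇑(Hom.ofLE (Gr_mono G (Set.diff_subset (s := s) (t := {v})))) = id := rfl
    rw [this, List.map_id]
  have hvp : v ∉ p.support := by rw [hsupp]; exact hvsup
  let q : (Gr G s).Walk a v := p.concat h2.symm
  have hqpath : q.IsPath := by
    rw [← Walk.isPath_reverse_iff]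
    have : q.reverse = Walk.cons h2 p.reverse := by
      simp only [q, Walk.reverse_concat]
    rw [this, Walk.cons_isPath_iff]
    refine ⟨hppath.reverse, ?_⟩
    rw [Walk.support_reverse]
    intro hv; exact hvp (List.mem_reverse.mp hv)
  have hcyc : (Walk.cons h1 q).IsCycle := by
    rw [Walk.cons_isCycle_iff]
    refine ⟨hqpath, ?_⟩
    intro hmem
    rw [Walk.edges_concat, List.concat_eq_append, List.mem_append] at hmem
    rcases hmem with h' | h'
    · exact hvp (p.fst_mem_support_of_mem_edges h')
    · rw [List.mem_singleton, Sym2.eq_iff] at h'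
      rcases h' with ⟨rfl, _⟩ | ⟨_, rfl⟩
      · exact h2.ne rfl
      · exact hab rfl
  exact ha _ hcyc

lemma exit_lemma {G : SimpleGraph V} {s : Set V} : ∀ {a v : V} (p : (Gr G s).Walk a v),
    a ≠ v → a ∈ s → ∃ w, w ∈ comp G (s \ {v}) a ∧ (Gr G s).Adj w v := by
  intro a v p
  induction p with
  | nil => intro h _; exact absurd rfl h
  | @cons u y z h q ih =>
    intro hav has
    have hus : u ∈ s \ {z} := ⟨has, by simpa using hav⟩
    by_cases hy : y = z
    · subst hy; exact ⟨u, mem_comp_self hus, h⟩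
    · obtain ⟨w, hw, hwv⟩ := ih hy h.2.1
      have hya : y ∈ comp G (s \ {z}) u :=
        comp_adj_closed (mem_comp_self hus) ⟨hus, ⟨h.2.1, by simpa using hy⟩, h.2.2⟩
      rw [comp_eq_of_mem hya] at hw
      exact ⟨w, hw, hwv⟩

lemma acyclic_mono {H H' : SimpleGraph V} (hle : H ≤ H') (ha : H'.IsAcyclic) : H.IsAcyclic :=
  fun _ c hc => ha (c.mapLe hle) (hc.mapLe hle)

lemma bot_isMatching (G : SimpleGraph V) : (⊥ : G.Subgraph).IsMatching := by
  intro v hv; simp only [Subgraph.verts_bot, Set.mem_empty_iff_false] at hv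

lemma comp_disjoint {G : SimpleGraph V} {s : Set V} {x y : V}
    (h : comp G s x ≠ comp G s y) : Disjoint (comp G s x) (comp G s y) := by
  rw [Set.disjoint_left]
  intro z hzx hzy
  exact h ((comp_eq_of_mem hzx).symm.trans (comp_eq_of_mem hzy))

lemma attach_unique {G : SimpleGraph V} {s s' : Set V} {v x w w' : V}
    (ha : (Gr G s).IsAcyclic) (hs' : s' ⊆ s \ {v})
    (hw : w ∈ comp G s' x) (hw' : w' ∈ comp G s' x)
    (h1 : (Gr G s).Adj v w) (h2 : (Gr G s).Adj v w') : w = w' := by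
  by_contra hne
  exact no_cycle_attach ha hne h1 h2
    ((comp_reach' hw hw').mono (Gr_mono G ((comp_subset G s' x).trans hs')))

lemma compFamily [Fintype V] (G : SimpleGraph V) {s b : Set V} {att : V}
    (hacyc : (Gr G s).IsAcyclic) (hbs : b ⊆ s \ {att}) (hatts : att ∈ s)
    (oracle : ∀ t : Set V, t ⊆ b → 2 ≤ t.ncard →
        (∀ x ∈ t, ∀ y ∈ t, (Gr G t).Reachable x y) → (Gr G t).IsAcyclic →
        ∀ w₀ ∈ t, ∃ M : G.Subgraph, M.IsMatching ∧ M.verts ⊆ t ∧ w₀ ∈ M.verts ∧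
          ∀ x ∈ t, 2 ≤ (t ∩ G.neighborSet x).ncard → x ∈ M.verts) :
    ∃ N : G.Subgraph, N.IsMatching ∧ N.verts ⊆ b ∧
      ∀ x ∈ b, 2 ≤ (s ∩ G.neighborSet x).ncard →
        s ∩ G.neighborSet x ⊆ comp G b x ∪ {att} → x ∈ N.verts := by
  classical
  -- the prescribed vertex of a component: the attachment to `att` if it exists
  set wt : Set V → V := fun t => if h : ∃ w ∈ t, G.Adj att w then h.choose
    else if h' : t.Nonempty then h'.some else att with hwt
  have hwtmem : ∀ t : Set V, t.Nonempty → wt t ∈ t := by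
    intro t ht
    rw [hwt]
    by_cases h : ∃ w ∈ t, G.Adj att w
    · simp only [h, dif_pos]; exact h.choose_spec.1
    · simp only [h, dif_neg, not_false_iff, ht, dif_pos]; exact ht.some_mem
  -- the component matchings
  have hFkey : ∀ t : Set V, ((∃ x ∈ b, t = comp G b x) ∧ 2 ≤ t.ncard) →
      ∃ M : G.Subgraph, M.IsMatching ∧ M.verts ⊆ t ∧ wt t ∈ M.verts ∧
          ∀ x ∈ t, 2 ≤ (t ∩ G.neighborSet x).ncard → x ∈ M.verts := by
    rintro t ⟨⟨x, hxb, rfl⟩, h2⟩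
    refine oracle _ (comp_subset G b x) h2 (fun a ha y hy => comp_reach' ha hy)
      (acyclic_mono (Gr_mono G ((comp_subset G b x).trans (hbs.trans Set.diff_subset))) hacyc)
      _ (hwtmem _ ⟨x, mem_comp_self hxb⟩)
  set F : Set V → G.Subgraph := fun t =>
    if h : (∃ x ∈ b, t = comp G b x) ∧ 2 ≤ t.ncard then (hFkey t h).choose else ⊥ with hF
  have hFspec : ∀ t : Set V, ∀ h : (∃ x ∈ b, t = comp G b x) ∧ 2 ≤ t.ncard,
      (F t).IsMatching ∧ (F t).verts ⊆ t ∧ wt t ∈ (F t).verts ∧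
        ∀ x ∈ t, 2 ≤ (t ∩ G.neighborSet x).ncard → x ∈ (F t).verts := by
    intro t h
    rw [hF]; simp only [h, dif_pos]
    exact (hFkey t h).choose_spec
  have hFverts : ∀ t : Set V, (F t).verts ⊆ t ∩ b := by
    intro t
    by_cases h : (∃ x ∈ b, t = comp G b x) ∧ 2 ≤ t.ncard
    · have hsp := (hFspec t h).2.1
      obtain ⟨⟨x, hxb, rfl⟩, -⟩ := h
      exact Set.subset_inter hsp (hsp.trans (comp_subset G b x))
    · rw [hF]
      simp only [h, dif_neg, not_false_iff, Subgraph.verts_bot, Set.empty_subset]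
  have hFmatch : ∀ t : Set V, (F t).IsMatching := by
    intro t
    rw [hF]
    by_cases h : (∃ x ∈ b, t = comp G b x) ∧ 2 ≤ t.ncard
    · simp only [h, dif_pos]; exact (hFkey t h).choose_spec.1
    · simp only [h, dif_neg, not_false_iff]; exact bot_isMatching G
  have hFcompverts : ∀ t : Set V, ((∃ x ∈ b, t = comp G b x) → False) → (F t).verts = ∅ := by
    intro t h
    rw [hF]
    have : ¬ ((∃ x ∈ b, t = comp G b x) ∧ 2 ≤ t.ncard) := fun hh => h hh.1
    simp only [this, dif_neg, not_false_iff, Subgraph.verts_bot]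
  refine ⟨⨆ t, F t, ?_, ?_, ?_⟩
  · refine Subgraph.IsMatching.iSup hFmatch ?_
    intro t t' hne
    rw [(hFmatch t).support_eq_verts, (hFmatch t').support_eq_verts]
    by_cases h : ∃ x ∈ b, t = comp G b x
    · by_cases h' : ∃ x ∈ b, t' = comp G b x
      · rcases h with ⟨x, hxb, rfl⟩
        rcases h' with ⟨y, hyb, rfl⟩
        exact Set.disjoint_of_subset ((hFverts _).trans Set.inter_subset_left)
          ((hFverts _).trans Set.inter_subset_left) (comp_disjoint hne)
      · rw [hFcompverts t' (fun hh => h' hh)]; exact Set.disjoint_empty _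
    · rw [hFcompverts t (fun hh => h hh)]; exact Set.empty_disjoint _
  · rw [Subgraph.verts_iSup]
    exact Set.iUnion_subset fun t => (hFverts t).trans Set.inter_subset_right
  · intro x hxb hint hsub
    set t := comp G b x with ht
    have hxt : x ∈ t := mem_comp_self hxb
    by_cases h2t : 2 ≤ t.ncard
    · have hspec := hFspec t ⟨⟨x, hxb, rfl⟩, h2t⟩
      have hmem : x ∈ (F t).verts := by
        by_cases hadjx : G.Adj att x
        · -- x is the unique attachment, hence the prescribed vertex
          have hex : ∃ w ∈ t, G.Adj att w := ⟨x, hxt, hadjx⟩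
          have hwteq : wt t = x := by
            have h1 : (Gr G s).Adj att (hex.choose) := by
              have hmem := hex.choose_spec.1
              exact ⟨hatts, (hbs.trans Set.diff_subset) (comp_subset G b x hmem),
                hex.choose_spec.2⟩
            have h2 : (Gr G s).Adj att x :=
              ⟨hatts, (hbs.trans Set.diff_subset) hxb, hadjx⟩
            have := attach_unique hacyc hbs hex.choose_spec.1 hxt h1 h2
            rw [hwt]; simp only [hex, dif_pos]; exact this
          exact hwteq ▸ hspec.2.2.1
        · -- all neighbours of x lie in its component
          have hsub' : s ∩ G.neighborSet x ⊆ t ∩ G.neighborSet x := by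
            intro y hy
            rcases hsub hy with hyt | hyatt
            · exact ⟨hyt, hy.2⟩
            · exfalso
              rw [Set.mem_singleton_iff] at hyatt
              exact hadjx (hyatt ▸ hy.2).symm
          exact hspec.2.2.2 x hxt (le_trans hint
            (Set.ncard_le_ncard hsub' (Set.toFinite _)))
      rw [Subgraph.verts_iSup]
      exact Set.mem_iUnion.mpr ⟨t, hmem⟩
    · -- the component is a singleton: contradiction with x being internal
      exfalso
      have htx : t ⊆ {x} := by
        intro y hyt
        by_contra hyx
        exact h2t (Set.one_lt_ncard_iff (Set.toFinite t) |>.mpr ⟨y, x, hyt, hxt, hyx⟩)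
      have : s ∩ G.neighborSet x ⊆ {att} := by
        intro y hy
        rcases hsub hy with hyt | hyatt
        · have : y = x := htx hyt
          exact absurd (this ▸ hy.2) (G.irrefl)
        · exact hyatt
      have := Set.ncard_le_ncard this (Set.toFinite _)
      simp only [Set.ncard_singleton] at this
      omega

lemma treeMatch [Fintype V] (G : SimpleGraph V) : ∀ (n : ℕ) (s : Set V), s.ncard ≤ n →
    ∀ v₀ ∈ s, 2 ≤ s.ncard →
    (∀ x ∈ s, ∀ y ∈ s, (Gr G s).Reachable x y) → (Gr G s).IsAcyclic →
    ∃ M : G.Subgraph, M.IsMatching ∧ M.verts ⊆ s ∧ v₀ ∈ M.verts ∧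
      ∀ x ∈ s, 2 ≤ (s ∩ G.neighborSet x).ncard → x ∈ M.verts := by
  intro n
  induction n with
  | zero => intro s hs v₀ hv₀ h2 _ _; omega
  | succ n ih =>
    intro s hsn v₀ hv₀ hs2 hconn hacyc
    classical
    -- v₀ has a neighbour u in s
    obtain ⟨u, hu⟩ : ∃ u, u ∈ s ∧ u ≠ v₀ ∧ G.Adj v₀ u := by
      obtain ⟨a, c, has, hcs, hac⟩ := (Set.one_lt_ncard_iff (Set.toFinite s)).mp hs2
      have : ∃ y, y ∈ s ∧ y ≠ v₀ := by
        by_cases hav : a = v₀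
        · exact ⟨c, hcs, fun hc => hac (by rw [hav, hc])⟩
        · exact ⟨a, has, hav⟩
      obtain ⟨y, hys, hyv⟩ := this
      obtain ⟨p⟩ := hconn y hys v₀ hv₀
      obtain ⟨w, hw, hwv⟩ := exit_lemma p hyv hys
      exact ⟨w, (hw.1 : w ∈ s \ {v₀}).1, by simpa using (hw.1 : w ∈ s \ {v₀}).2, hwv.2.2.symm⟩
    obtain ⟨hus, huv, hadj⟩ := hu
    by_cases hA : ∀ w ∈ s, G.Adj v₀ w → w = u
    · -- v₀ has degree 1 in s; match v₀ with u and recurse on the components of s \ {v₀, u}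
      set b := s \ {v₀, u} with hb
      have hbs : b ⊆ s \ {u} := fun y hy => ⟨hy.1, fun h => hy.2 (by simp [h])⟩
      have oracle : ∀ t : Set V, t ⊆ b → 2 ≤ t.ncard →
          (∀ x ∈ t, ∀ y ∈ t, (Gr G t).Reachable x y) → (Gr G t).IsAcyclic →
          ∀ w₀ ∈ t, ∃ M : G.Subgraph, M.IsMatching ∧ M.verts ⊆ t ∧ w₀ ∈ M.verts ∧
            ∀ x ∈ t, 2 ≤ (t ∩ G.neighborSet x).ncard → x ∈ M.verts := by
        intro t htb ht2 htc hta w₀ hw₀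
        have htcard : t.ncard ≤ n := by
          have hlt : t.ncard < s.ncard := Set.ncard_lt_ncard
            ⟨htb.trans (Set.diff_subset.trans (le_refl _)), fun hst =>
              (htb (hst hv₀)).2 (by simp)⟩ (Set.toFinite s)
          omega
        exact ih t htcard w₀ hw₀ ht2 htc hta
      obtain ⟨N, hNm, hNv, hNcov⟩ := compFamily G hacyc hbs hus oracle
      set Madj := G.subgraphOfAdj hadj with hMadj
      have hdisj : Disjoint Madj.support N.support := by
        rw [hNm.support_eq_verts, (Subgraph.IsMatching.subgraphOfAdj hadj).support_eq_verts]
        rw [SimpleGraph.subgraphOfAdj_verts]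
        rw [Set.disjoint_left]
        intro z hz hzN
        have := hNv hzN
        rcases hz with rfl | rfl
        · exact this.2 (by simp)
        · exact this.2 (by simp)
      refine ⟨Madj ⊔ N, (Subgraph.IsMatching.subgraphOfAdj hadj).sup hNm hdisj, ?_, ?_, ?_⟩
      · rw [Subgraph.verts_sup, hMadj, SimpleGraph.subgraphOfAdj_verts]
        refine Set.union_subset ?_ (hNv.trans (Set.diff_subset))
        intro z hz; rcases hz with rfl | rfl
        · exact hv₀
        · exact hus
      · rw [Subgraph.verts_sup]; left; rw [hMadj]; simp
      · intro x hxs hint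
        rw [Subgraph.verts_sup]
        by_cases hxv : x = v₀
        · left; rw [hMadj]; simp [hxv]
        · by_cases hxu : x = u
          · left; rw [hMadj]; simp [hxu]
          · right
            have hxb : x ∈ b := ⟨hxs, by simp [hxv, hxu]⟩
            refine hNcov x hxb hint ?_
            intro y hy
            by_cases hyv : y = v₀
            · exfalso
              have : G.Adj v₀ x := by rw [← hyv]; exact hy.2.symm
              exact hxu (hA x hxs this)
            · by_cases hyu : y = u
              · right; simp [hyu]
              · left
                have hyb : y ∈ b := ⟨hy.1, by simp [hyv, hyu]⟩
                exact comp_adj_closed (mem_comp_self hxb) ⟨hxb, hyb, hy.2⟩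
    · -- v₀ has degree at least 2
      push_neg at hA
      obtain ⟨u2, hu2s, hadj2, hu2u⟩ := hA
      set b := s \ {v₀} with hb
      have hub : u ∈ b := ⟨hus, by simpa using huv⟩
      set t₁ := comp G b u with ht₁
      set s₁ := insert v₀ t₁ with hs₁
      have ht₁b : t₁ ⊆ b := comp_subset G b u
      have hs₁s : s₁ ⊆ s := by
        rw [hs₁]
        exact Set.insert_subset hv₀ (ht₁b.trans Set.diff_subset)
      have hu2t₁ : u2 ∉ t₁ := by
        intro hmem
        refine no_cycle_attach hacyc (Ne.symm hu2u) ⟨hv₀, hus, hadj⟩ ⟨hv₀, hu2s, hadj2⟩ ?_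
        exact ((comp_reach' (mem_comp_self hub) hmem).mono (Gr_mono G ht₁b)).mono (le_refl _)
      have hu2s₁ : u2 ∉ s₁ := by
        rw [hs₁]
        intro h
        rcases h with h | h
        · exact hadj2.ne h.symm
        · exact hu2t₁ h
      -- recurse on s₁ = t₁ ∪ {v₀}
      have hs₁card : s₁.ncard ≤ n := by
        have : s₁.ncard < s.ncard :=
          Set.ncard_lt_ncard ⟨hs₁s, fun h => hu2s₁ (h hu2s)⟩ (Set.toFinite s)
        omega
      have hv₀s₁ : v₀ ∈ s₁ := by rw [hs₁]; exact Set.mem_insert _ _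
      have hus₁ : u ∈ s₁ := by rw [hs₁]; exact Set.mem_insert_of_mem _ (mem_comp_self hub)
      have hs₁2 : 2 ≤ s₁.ncard :=
        (Set.one_lt_ncard_iff (Set.toFinite s₁)).mpr ⟨v₀, u, hv₀s₁, hus₁, Ne.symm huv⟩
      have hs₁conn : ∀ x ∈ s₁, ∀ y ∈ s₁, (Gr G s₁).Reachable x y := by
        have key : ∀ x ∈ s₁, (Gr G s₁).Reachable x v₀ := by
          intro x hx
          rcases (Set.mem_insert_iff.mp hx) with rfl | hxt
          · exact Reachable.refl _
          · have h1 : (Gr G s₁).Reachable x u :=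
              (comp_reach' hxt (mem_comp_self hub)).mono
                (Gr_mono G (Set.subset_insert _ _))
            exact h1.trans (Adj.reachable ⟨hus₁, hv₀s₁, hadj.symm⟩)
        intro x hx y hy
        exact (key x hx).trans (key y hy).symm
      have hs₁acyc : (Gr G s₁).IsAcyclic := acyclic_mono (Gr_mono G hs₁s) hacyc
      obtain ⟨M₁, hM₁m, hM₁v, hM₁v₀, hM₁cov⟩ :=
        ih s₁ hs₁card v₀ hv₀s₁ hs₁2 hs₁conn hs₁acyc
      -- the other components
      set b2 := b \ t₁ with hb2
      have hb2s : b2 ⊆ s \ {v₀} := Set.diff_subset.trans (le_refl _)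
      have oracle : ∀ t : Set V, t ⊆ b2 → 2 ≤ t.ncard →
          (∀ x ∈ t, ∀ y ∈ t, (Gr G t).Reachable x y) → (Gr G t).IsAcyclic →
          ∀ w₀ ∈ t, ∃ M : G.Subgraph, M.IsMatching ∧ M.verts ⊆ t ∧ w₀ ∈ M.verts ∧
            ∀ x ∈ t, 2 ≤ (t ∩ G.neighborSet x).ncard → x ∈ M.verts := by
        intro t htb ht2 htc hta w₀ hw₀
        have htcard : t.ncard ≤ n := by
          have hlt : t.ncard < s.ncard := Set.ncard_lt_ncard
            ⟨(htb.trans hb2s).trans Set.diff_subset, fun hst =>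
              ((htb.trans hb2s) (hst hv₀)).2 (by simp)⟩ (Set.toFinite s)
          omega
        exact ih t htcard w₀ hw₀ ht2 htc hta
      obtain ⟨N, hNm, hNv, hNcov⟩ := compFamily G hacyc hb2s hv₀ oracle
      have hdisj : Disjoint M₁.support N.support := by
        rw [hNm.support_eq_verts, hM₁m.support_eq_verts]
        rw [Set.disjoint_left]
        intro z hz hzN
        have hz2 := hNv hzN
        rcases Set.mem_insert_iff.mp (hM₁v hz) with rfl | hzt
        · exact (hb2s hz2).2 (by simp)
        · exact hz2.2 hzt
      refine ⟨M₁ ⊔ N, hM₁m.sup hNm hdisj, ?_, ?_, ?_⟩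
      · rw [Subgraph.verts_sup]
        exact Set.union_subset (hM₁v.trans hs₁s) ((hNv.trans hb2s).trans Set.diff_subset)
      · rw [Subgraph.verts_sup]; left; exact hM₁v₀
      · intro x hxs hint
        rw [Subgraph.verts_sup]
        by_cases hxv : x = v₀
        · left; rw [hxv]; exact hM₁v₀
        · have hxb : x ∈ b := ⟨hxs, by simpa using hxv⟩
          by_cases hxt : x ∈ t₁
          · -- x lies in the component of u; it is internal in s₁
            left
            have hsub : s ∩ G.neighborSet x ⊆ s₁ ∩ G.neighborSet x := by
              intro y hy
              by_cases hyv : y = v₀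
              · exact ⟨by rw [hyv]; exact hv₀s₁, hy.2⟩
              · have hyb : y ∈ b := ⟨hy.1, by simpa using hyv⟩
                have : y ∈ comp G b x := comp_adj_closed (mem_comp_self hxb) ⟨hxb, hyb, hy.2⟩
                rw [comp_eq_of_mem hxt] at this
                exact ⟨Set.mem_insert_of_mem _ this, hy.2⟩
            exact hM₁cov x (Set.mem_insert_of_mem _ hxt) (le_trans hint
              (Set.ncard_le_ncard hsub (Set.toFinite _)))
          · -- x lies in another component
            right
            have hxb2 : x ∈ b2 := ⟨hxb, hxt⟩
            refine hNcov x hxb2 hint ?_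
            intro y hy
            by_cases hyv : y = v₀
            · right; simp [hyv]
            · left
              have hyb : y ∈ b := ⟨hy.1, by simpa using hyv⟩
              have hyc : y ∈ comp G b x := comp_adj_closed (mem_comp_self hxb) ⟨hxb, hyb, hy.2⟩
              have hyt : y ∉ t₁ := by
                intro hyt₁
                have heq : comp G b y = comp G b x := comp_eq_of_mem hyc
                rw [comp_eq_of_mem hyt₁] at heq
                refine hxt ?_
                show x ∈ comp G b u
                rw [heq]
                exact mem_comp_self hxb
              -- y ∈ comp G b2 x
              have hcompsub : comp G b x ⊆ b2 := by
                intro z hz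
                refine ⟨hz.1, fun hzt => ?_⟩
                have heq : comp G b z = comp G b x := comp_eq_of_mem hz
                rw [comp_eq_of_mem hzt] at heq
                refine hxt ?_
                show x ∈ comp G b u
                rw [heq]
                exact mem_comp_self hxb
              obtain ⟨p⟩ := (mem_comp_self hxb).2.symm.trans hyc.2
              have : (Gr G (comp G b x)).Reachable x y := comp_reach (mem_comp_self hxb) p
              exact ⟨⟨hyb, hyt⟩, this.mono (Gr_mono G hcompsub)⟩

lemma matching_card [Fintype V] {G : SimpleGraph V} {M : G.Subgraph} (hM : M.IsMatching) :
    M.verts.ncard = 2 * M.edgeSet.ncard := by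
  classical
  haveI : Fintype M.verts := (Set.toFinite _).fintype
  haveI : Fintype M.edgeSet := (Set.toFinite _).fintype
  rw [Set.ncard_eq_toFinset_card', Set.ncard_eq_toFinset_card', Set.toFinset_card,
    Set.toFinset_card]
  rw [← Finset.card_univ (α := M.verts), ← Finset.card_univ (α := M.edgeSet)]
  rw [Finset.card_eq_sum_card_fiberwise
    (f := hM.toEdge) (t := Finset.univ) (fun x _ => Finset.mem_univ _)]
  rw [Finset.sum_congr rfl (g := fun _ => 2) ?_, Finset.sum_const, Finset.card_univ,
    smul_eq_mul, mul_comm]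
  rintro ⟨e, he⟩ -
  induction' e with x y'
  have hadj : M.Adj x y' := (Subgraph.mem_edgeSet).mp he
  have hx : x ∈ M.verts := M.edge_vert hadj
  have hy : y' ∈ M.verts := M.edge_vert hadj.symm
  have hne : x ≠ y' := (M.adj_sub hadj).ne
  have hset : (Finset.univ.filter fun v => hM.toEdge v = ⟨s(x, y'), he⟩)
      = {⟨x, hx⟩, ⟨y', hy⟩} := by
    ext v
    simp only [Finset.mem_filter, Finset.mem_univ, true_and, Finset.mem_insert,
      Finset.mem_singleton]
    constructor
    · intro hv
      have hvmem : (v : V) ∈ (hM.toEdge v).val := Sym2.mem_mk_left _ _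
      rw [hv] at hvmem
      simp only [Sym2.mem_iff] at hvmem
      rcases hvmem with h | h
      · left; exact Subtype.ext h
      · right; exact Subtype.ext h
    · intro hv
      rcases hv with rfl | rfl
      · exact hM.toEdge_eq_of_adj hadj
      · rw [hM.toEdge_eq_of_adj hadj.symm]; exact Subtype.ext Sym2.eq_swap
  rw [hset, Finset.card_insert_of_notMem (by simp [Subtype.ext_iff, hne]),
    Finset.card_singleton]

section Deletion

variable {G : SimpleGraph V} {x y : V}

lemma Gdel_adj (G : SimpleGraph V) (x y a b : V) :
    (G \ fromEdgeSet {s(x, y)}).Adj a b ↔ G.Adj a b ∧ s(a, b) ≠ s(x, y) := by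
  rw [sdiff_adj, fromEdgeSet_adj]
  constructor
  · rintro ⟨h, h2⟩
    exact ⟨h, fun he => h2 ⟨by simp [he], h.ne⟩⟩
  · rintro ⟨h, h2⟩
    exact ⟨h, fun he => h2 (by simpa using he.1)⟩

lemma Gdel_reachable (hr : (G \ fromEdgeSet {s(x, y)}).Reachable x y) {a b : V}
    (p : G.Walk a b) : (G \ fromEdgeSet {s(x, y)}).Reachable a b := by
  induction p with
  | nil => exact Reachable.refl _
  | @cons u w z h q ih =>
    refine Reachable.trans ?_ ih
    by_cases he : s(u, w) = s(x, y)
    · rcases Sym2.eq_iff.mp he with ⟨rfl, rfl⟩ | ⟨rfl, rfl⟩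
      · exact hr
      · exact hr.symm
    · exact Adj.reachable ((Gdel_adj G x y u w).mpr ⟨h, he⟩)

lemma Gdel_connected (hG : G.Connected) {w : V} (c : G.Walk w w) (hc : c.IsCycle)
    (he : s(x, y) ∈ c.edges) : (G \ fromEdgeSet {s(x, y)}).Connected := by
  have hr : G.Adj x y ∧ (G \ fromEdgeSet {s(x, y)}).Reachable x y :=
    adj_and_reachable_delete_edges_iff_exists_cycle.mpr ⟨w, c, hc, he⟩
  haveI := hG.nonempty
  refine Connected.mk ?_
  intro a b
  obtain ⟨p⟩ := hG.preconnected a b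
  exact Gdel_reachable hr.2 p

lemma Gdel_edgeSet : (G \ fromEdgeSet {s(x, y)}).edgeSet = G.edgeSet \ {s(x, y)} := by
  simp [edgeSet_sdiff, edgeSet_fromEdgeSet, edgeSet_sdiff_sdiff_isDiag]

lemma Gdel_nbr_of_ne {v : V} (hvx : v ≠ x) (hvy : v ≠ y) :
    (G \ fromEdgeSet {s(x, y)}).neighborSet v = G.neighborSet v := by
  ext z
  simp only [mem_neighborSet, Gdel_adj]
  constructor
  · exact fun h => h.1
  · intro h
    refine ⟨h, fun he => ?_⟩
    rcases Sym2.eq_iff.mp he with ⟨h1, h2⟩ | ⟨h1, h2⟩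
    · exact hvx h1
    · exact hvy h1

lemma Gdel_nbr_left (hadj : G.Adj x y) :
    (G \ fromEdgeSet {s(x, y)}).neighborSet x = G.neighborSet x \ {y} := by
  ext z
  simp only [mem_neighborSet, Gdel_adj, Set.mem_diff, Set.mem_singleton_iff]
  constructor
  · rintro ⟨h, h2⟩
    exact ⟨h, fun he => h2 (by rw [he])⟩
  · rintro ⟨h, h2⟩
    refine ⟨h, fun he => ?_⟩
    rcases Sym2.eq_iff.mp he with ⟨h1, h3⟩ | ⟨h1, h3⟩
    · exact h2 h3
    · exact h2 (h3 ▸ h1.symm ▸ rfl)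

end Deletion

lemma cycle_two_edges {G : SimpleGraph V} {w : V} (c : G.Walk w w) (hc : c.IsCycle) :
    ∃ a b, a ≠ b ∧ s(w, a) ∈ c.edges ∧ s(w, b) ∈ c.edges := by
  cases c with
  | nil => exact absurd hc (by simp [Walk.isCycle_def])
  | @cons _ v₁ _ h q =>
    have hv₁ : v₁ ≠ w := h.ne'
    have hqrev : ¬ q.reverse.Nil := by
      intro hn
      exact hv₁ hn.eq.symm
    obtain ⟨b, h2, r, hqr⟩ := Walk.not_nil_iff.mp hqrev
    have hbe : s(w, b) ∈ q.edges := by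
      have : s(w, b) ∈ q.reverse.edges := by rw [hqr]; simp
      rwa [Walk.edges_reverse, List.mem_reverse] at this
    have hnodup := hc.edges_nodup
    rw [Walk.edges_cons] at hnodup
    have hne : s(w, v₁) ∉ q.edges := (List.nodup_cons.mp hnodup).1
    refine ⟨v₁, b, ?_, by simp, by simp [hbe]⟩
    intro hvb
    exact hne (hvb ▸ hbe)

lemma cycle_two_edges_at {G : SimpleGraph V} {w v : V} (c : G.Walk w w) (hc : c.IsCycle)
    (hv : v ∈ c.support) : ∃ a b, a ≠ b ∧ s(v, a) ∈ c.edges ∧ s(v, b) ∈ c.edges := by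
  haveI := Classical.decEq V
  obtain ⟨a, b, hab, ha, hb⟩ := cycle_two_edges (c.rotate v hv) (hc.rotate hv)
  exact ⟨a, b, hab, ((c.rotate_edges v hv).mem_iff).mp ha, ((c.rotate_edges v hv).mem_iff).mp hb⟩

lemma cycle_closed [Fintype V] {G : SimpleGraph V} {w : V} (c : G.Walk w w) (hc : c.IsCycle)
    (hdeg : ∀ u v, s(u, v) ∈ c.edges → (G.neighborSet u).ncard ≤ 2) :
    ∀ v ∈ c.support, ∀ z, G.Adj v z → z ∈ c.support := by
  intro v hv z hz
  obtain ⟨a, b, hab, ha, hb⟩ := cycle_two_edges_at c hc hv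
  by_contra hzs
  have haa : G.Adj v a := c.adj_of_mem_edges ha
  have hbb : G.Adj v b := c.adj_of_mem_edges hb
  have hza : z ≠ a := fun h => hzs (h ▸ c.snd_mem_support_of_mem_edges ha)
  have hzb : z ≠ b := fun h => hzs (h ▸ c.snd_mem_support_of_mem_edges hb)
  have hsub : ({a, b, z} : Set V) ⊆ G.neighborSet v := by
    intro t ht
    rcases ht with rfl | rfl | rfl
    · exact haa
    · exact hbb
    · exact hz
  have h3 : ({a, b, z} : Set V).ncard = 3 := by
    rw [Set.ncard_insert_of_notMem (by simp [hab, hza.symm]) (Set.toFinite _),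
      Set.ncard_insert_of_notMem (by simp [hzb.symm]) (Set.toFinite _), Set.ncard_singleton]
  have hle := Set.ncard_le_ncard hsub (Set.toFinite _)
  have h2 := hdeg v a ha
  omega

lemma all_in_support [Fintype V] {G : SimpleGraph V} (hG : G.Connected) {w : V}
    (c : G.Walk w w) (hc : c.IsCycle)
    (hdeg : ∀ u v, s(u, v) ∈ c.edges → (G.neighborSet u).ncard ≤ 2) (z : V) :
    z ∈ c.support := by
  obtain ⟨p⟩ := hG.preconnected w z
  have key : ∀ {a b : V} (p : G.Walk a b), a ∈ c.support → b ∈ c.support := by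
    intro a b p
    induction p with
    | nil => exact id
    | cons h q ih => intro ha; exact ih (cycle_closed c hc hdeg _ ha _ h)
  exact key p c.start_mem_support

lemma deg_ncard [Fintype V] (G : SimpleGraph V) [DecidableRel G.Adj] (v : V) :
    (G.neighborSet v).ncard = G.degree v := by
  rw [← card_neighborSet_eq_degree, Set.ncard_eq_toFinset_card', Set.toFinset_card]

lemma map_ofLE_edgeSet {G G' : SimpleGraph V} (h : G ≤ G') (M : G.Subgraph) :
    (M.map (SimpleGraph.Hom.ofLE h)).edgeSet = M.edgeSet := by
  ext e
  refine Sym2.ind (fun a b => ?_) e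
  simp only [Subgraph.mem_edgeSet, Subgraph.map_adj]
  constructor
  · rintro ⟨u', v', hadj, hu, hv⟩
    rw [Hom.coe_ofLE] at hu hv
    rwa [← (hu : u' = a), ← (hv : v' = b)]
  · intro hadj
    exact ⟨a, b, hadj, rfl, rfl⟩

lemma mainMatch [Fintype V] : ∀ (m : ℕ) (G : SimpleGraph V), G.edgeSet.ncard ≤ m →
    G.Connected → 2 ≤ Fintype.card V →
    ∃ M : G.Subgraph, M.IsMatching ∧
      (Fintype.card V : ℤ) ≤ 2 * (M.edgeSet.ncard : ℤ) +
        max (({v : V | (G.neighborSet v).ncard = 1}.ncard : ℤ)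
          + (G.edgeSet.ncard : ℤ) - (Fintype.card V : ℤ)) 1 := by
  have hdeg1 : ∀ (G : SimpleGraph V), G.Connected → 2 ≤ Fintype.card V →
      ∀ v : V, 1 ≤ (G.neighborSet v).ncard := by
    intro G hG h2 v
    obtain ⟨z, hz⟩ := Fintype.exists_ne_of_one_lt_card (by omega) v
    obtain ⟨p⟩ := hG.preconnected v z
    cases p with
    | nil => exact absurd rfl hz.symm
    | cons h q => exact (Set.ncard_pos (Set.toFinite _)).mpr ⟨_, h⟩
  intro m
  induction m with
  | zero =>
    intro G hE hG h2
    exfalso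
    obtain ⟨v, w, hvw⟩ := Fintype.exists_pair_of_one_lt_card (α := V) (by omega)
    obtain ⟨p⟩ := hG.preconnected v w
    cases p with
    | nil => exact hvw rfl
    | cons h q =>
      have : 0 < G.edgeSet.ncard :=
        (Set.ncard_pos (Set.toFinite _)).mpr ⟨_, (G.mem_edgeSet).mpr h⟩
      omega
  | succ m ih =>
    intro G hE hG hn2
    classical
    by_cases hacyc : G.IsAcyclic
    · -- G is a tree
      haveI : DecidableRel G.Adj := fun a b => Classical.dec _
      have hT : G.IsTree := ⟨hG, hacyc⟩
      have hEn : G.edgeSet.ncard + 1 = Fintype.card V := by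
        have hcard := hT.card_edgeFinset
        rwa [Set.ncard_eq_toFinset_card' G.edgeSet, show G.edgeSet.toFinset = G.edgeFinset
          from rfl]
      have hleaf : ∃ v₀ : V, (G.neighborSet v₀).ncard = 1 := by
        by_contra hno
        push_neg at hno
        have hsum := G.sum_degrees_eq_twice_card_edges
        have hdeg : ∀ v : V, 2 ≤ G.degree v := by
          intro v
          have h1 := hdeg1 G hG hn2 v
          have hne := hno v
          rw [deg_ncard G v] at h1 hne
          omega
        have hge : 2 * Fintype.card V ≤ ∑ v : V, G.degree v := by
          calc 2 * Fintype.card V = ∑ _v : V, 2 := by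
                rw [Finset.sum_const, Finset.card_univ, smul_eq_mul, mul_comm]
            _ ≤ ∑ v : V, G.degree v := Finset.sum_le_sum fun v _ => hdeg v
        have hEF : G.edgeFinset.card = G.edgeSet.ncard := by
          rw [Set.ncard_eq_toFinset_card' G.edgeSet]; rfl
        omega
      obtain ⟨v₀, hv₀⟩ := hleaf
      have hGr : Gr G Set.univ = G := Gr_univ G
      have huniv : (Set.univ : Set V).ncard = Fintype.card V := by
        rw [Set.ncard_univ, Nat.card_eq_fintype_card]
      obtain ⟨M, hMm, hMv, hMv₀, hMcov⟩ := treeMatch G (Fintype.card V) Set.univ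
        (le_of_eq huniv) v₀ trivial (huniv ▸ hn2)
        (by rw [hGr]; exact fun x _ y _ => hG.preconnected x y) (by rw [hGr]; exact hacyc)
      refine ⟨M, hMm, ?_⟩
      set Lset := {v : V | (G.neighborSet v).ncard = 1} with hLset
      have hIsub : Lsetᶜ ∪ {v₀} ⊆ M.verts := by
        intro x hx
        rcases hx with hx | hx
        · refine hMcov x trivial ?_
          rw [Set.univ_inter]
          have h1 := hdeg1 G hG hn2 x
          have : ¬ (G.neighborSet x).ncard = 1 := hx
          omega
        · rw [Set.mem_singleton_iff] at hx
          rw [hx]; exact hMv₀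
      have hcount : Lsetᶜ.ncard + 1 ≤ M.verts.ncard := by
        have he : (Lsetᶜ ∪ {v₀}).ncard = Lsetᶜ.ncard + 1 := by
          have hnm : v₀ ∉ Lsetᶜ := fun hx => hx hv₀
          rw [Set.union_singleton, Set.ncard_insert_of_notMem hnm (Set.toFinite _)]
        rw [← he]
        exact Set.ncard_le_ncard hIsub (Set.toFinite _)
      have hcompl := Set.ncard_add_ncard_compl Lset
      rw [Nat.card_eq_fintype_card] at hcompl
      have hM2 := matching_card hMm
      have hmax : ((Lset.ncard : ℤ) + (G.edgeSet.ncard : ℤ) - (Fintype.card V : ℤ)) ≤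
          max ((Lset.ncard : ℤ) + (G.edgeSet.ncard : ℤ) - (Fintype.card V : ℤ)) 1 :=
        le_max_left _ _
      have hkey : (Fintype.card V : ℤ) ≤ 2 * (M.edgeSet.ncard : ℤ) +
          ((Lset.ncard : ℤ) + (G.edgeSet.ncard : ℤ) - (Fintype.card V : ℤ)) := by
        omega
      linarith
    · -- G contains a cycle
      simp only [SimpleGraph.IsAcyclic] at hacyc
      push_neg at hacyc
      obtain ⟨w, c, hc⟩ := hacyc
      have hEpos : 1 ≤ G.edgeSet.ncard := by
        obtain ⟨a, b, hab, ha, hb⟩ := cycle_two_edges c hc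
        exact (Set.ncard_pos (Set.toFinite _)).mpr ⟨_, (Walk.edges_subset_edgeSet c) ha⟩
      by_cases h3 : ∃ p q, s(p, q) ∈ c.edges ∧ 3 ≤ (G.neighborSet p).ncard
      · obtain ⟨p, q, hpq, h3p⟩ := h3
        set G' := G \ fromEdgeSet {s(p, q)} with hG'
        have hle : G' ≤ G := sdiff_le
        have hconn' : G'.Connected := Gdel_connected hG c hc hpq
        have hEdel : G'.edgeSet.ncard = G.edgeSet.ncard - 1 := by
          rw [hG', Gdel_edgeSet,
            Set.ncard_diff_singleton_of_mem ((Walk.edges_subset_edgeSet c) hpq)]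
        obtain ⟨M', hM'm, hM'le⟩ := ih G' (by omega) hconn' hn2
        refine ⟨M'.map (Hom.ofLE hle), hM'm.map_ofLE hle, ?_⟩
        rw [map_ofLE_edgeSet hle M']
        have hadjpq : G.Adj p q := c.adj_of_mem_edges hpq
        have hLsub : {v : V | (G'.neighborSet v).ncard = 1} ⊆
            {v : V | (G.neighborSet v).ncard = 1} ∪ {q} := by
          intro v hv
          by_cases hvp : v = p
          · exfalso
            have hnb : G'.neighborSet p = G.neighborSet p \ {q} :=
              Gdel_nbr_left hadjpq
            rw [hvp] at hv
            have : (G'.neighborSet p).ncard = (G.neighborSet p).ncard - 1 := by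
              rw [hnb]
              exact Set.ncard_diff_singleton_of_mem
                (show q ∈ G.neighborSet p from hadjpq)
            have hv' : (G'.neighborSet p).ncard = 1 := hv
            omega
          · by_cases hvq : v = q
            · right; simp [hvq]
            · left
              have := Gdel_nbr_of_ne (G := G) (x := p) (y := q) hvp hvq
              show (G.neighborSet v).ncard = 1
              rw [← this]
              exact hv
        have hL : {v : V | (G'.neighborSet v).ncard = 1}.ncard ≤
            {v : V | (G.neighborSet v).ncard = 1}.ncard + 1 := by
          refine le_trans (Set.ncard_le_ncard hLsub (Set.toFinite _)) ?_
          refine le_trans (Set.ncard_union_le _ _) ?_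
          simp
        have hmaxle : max (({v : V | (G'.neighborSet v).ncard = 1}.ncard : ℤ)
              + (G'.edgeSet.ncard : ℤ) - (Fintype.card V : ℤ)) 1 ≤
            max (({v : V | (G.neighborSet v).ncard = 1}.ncard : ℤ)
              + (G.edgeSet.ncard : ℤ) - (Fintype.card V : ℤ)) 1 := by
          refine max_le_max ?_ (le_refl _)
          omega
        linarith
      · -- all vertices on the cycle have degree exactly 2, so G is that cycle
        push_neg at h3
        have h3' : ∀ u v, s(u, v) ∈ c.edges → (G.neighborSet u).ncard ≤ 2 := by
          intro u v h
          have := h3 u v h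
          omega
        have hall : ∀ z : V, z ∈ c.support := all_in_support hG c hc h3'
        have hdeg2 : ∀ v : V, (G.neighborSet v).ncard = 2 := by
          intro v
          obtain ⟨a, b, hab, ha, hb⟩ := cycle_two_edges_at c hc (hall v)
          have hub := h3' v a ha
          have hsub : ({a, b} : Set V) ⊆ G.neighborSet v := by
            intro t ht
            rcases ht with rfl | rfl
            · exact c.adj_of_mem_edges ha
            · exact c.adj_of_mem_edges hb
          have h2 : ({a, b} : Set V).ncard = 2 := by
            rw [Set.ncard_insert_of_notMem (by simp [hab]) (Set.toFinite _),
              Set.ncard_singleton]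
          have := Set.ncard_le_ncard hsub (Set.toFinite _)
          omega
        have hL0 : {v : V | (G.neighborSet v).ncard = 1} = ∅ := by
          ext v
          simp only [Set.mem_setOf_eq, Set.mem_empty_iff_false, iff_false]
          rw [hdeg2 v]
          omega
        haveI : DecidableRel G.Adj := fun a b => Classical.dec _
        have hsum := G.sum_degrees_eq_twice_card_edges
        have hdeg : ∀ v : V, G.degree v = 2 := by
          intro v
          rw [← deg_ncard G v]
          exact hdeg2 v
        have hsum2 : ∑ v : V, G.degree v = 2 * Fintype.card V := by
          rw [Finset.sum_congr rfl fun v _ => hdeg v, Finset.sum_const, Finset.card_univ,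
            smul_eq_mul, mul_comm]
        have hEF : G.edgeFinset.card = G.edgeSet.ncard := by
          rw [Set.ncard_eq_toFinset_card' G.edgeSet]; rfl
        have hEn : G.edgeSet.ncard = Fintype.card V := by omega
        -- delete the first edge of the cycle
        obtain ⟨a, b, hab, ha, hb⟩ := cycle_two_edges c hc
        set G' := G \ fromEdgeSet {s(w, a)} with hG'
        have hle : G' ≤ G := sdiff_le
        have hconn' : G'.Connected := Gdel_connected hG c hc ha
        have hadjwa : G.Adj w a := c.adj_of_mem_edges ha
        have hEdel : G'.edgeSet.ncard = G.edgeSet.ncard - 1 := by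
          rw [hG', Gdel_edgeSet,
            Set.ncard_diff_singleton_of_mem ((Walk.edges_subset_edgeSet c) ha)]
        obtain ⟨M', hM'm, hM'le⟩ := ih G' (by omega) hconn' hn2
        refine ⟨M'.map (Hom.ofLE hle), hM'm.map_ofLE hle, ?_⟩
        rw [map_ofLE_edgeSet hle M']
        have hLsub : {v : V | (G'.neighborSet v).ncard = 1} ⊆ {w, a} := by
          intro v hv
          by_cases hvw : v = w
          · left; exact hvw
          · by_cases hva : v = a
            · right; exact hva
            · exfalso
              have := Gdel_nbr_of_ne (G := G) (x := w) (y := a) hvw hva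
              have hv' : (G'.neighborSet v).ncard = 1 := hv
              rw [this, hdeg2 v] at hv'
              omega
        have hL2 : {v : V | (G'.neighborSet v).ncard = 1}.ncard ≤ 2 := by
          refine le_trans (Set.ncard_le_ncard hLsub (Set.toFinite _)) ?_
          refine le_trans (Set.ncard_insert_le _ _) ?_
          simp
        have hmaxle : max (({v : V | (G'.neighborSet v).ncard = 1}.ncard : ℤ)
              + (G'.edgeSet.ncard : ℤ) - (Fintype.card V : ℤ)) 1 ≤ 1 := by
          rw [max_le_iff]
          refine ⟨?_, le_refl _⟩
          omega
        have hmaxge : (1 : ℤ) ≤ max (({v : V | (G.neighborSet v).ncard = 1}.ncard : ℤ)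
            + (G.edgeSet.ncard : ℤ) - (Fintype.card V : ℤ)) 1 := le_max_right _ _
        linarith


end Aux

/-- **Lemma.** If the underlying graph of a complex unit gain graph `(G, H)` is
connected, has no vertex of degree 1 and has cyclomatic number at least 2, then
`rank(H) < 2m(G) + c(G)`. -/
theorem not_upper_optimal_of_no_pendant {V : Type*} [Fintype V]
    (G : SimpleGraph V) [DecidableRel G.Adj] (H : Matrix V V ℂ)
    (hH : IsUnitGain G H) (hG : G.Connected)
    (hpend : ∀ v : V, G.degree v ≠ 1) (hc : 2 ≤ cycNum G) :
    (H.rank : ℤ) < 2 * (matchNum G : ℤ) + cycNum G := by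
  classical
  haveI : Nonempty V := hG.nonempty
  have hsub : Subsingleton G.ConnectedComponent := by
    constructor
    intro a b
    obtain ⟨x, rfl⟩ := a.exists_rep
    obtain ⟨y, rfl⟩ := b.exists_rep
    exact ConnectedComponent.sound (hG.preconnected x y)
  have hω : Nat.card G.ConnectedComponent = 1 := by
    haveI : Nonempty G.ConnectedComponent := ⟨G.connectedComponentMk (Classical.arbitrary V)⟩
    rw [Nat.card_eq_one_iff_unique]
    exact ⟨hsub, inferInstance⟩
  have hcyc : cycNum G = (G.edgeSet.ncard : ℤ) - (Fintype.card V : ℤ) + 1 := by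
    rw [cycNum, hω, Nat.card_eq_fintype_card]
    norm_num
  have hn2 : 2 ≤ Fintype.card V := by
    by_contra hn
    push_neg at hn
    have hn1 : Fintype.card V = 1 := by
      have := Fintype.card_pos (α := V)
      omega
    have hE0 : G.edgeSet = ∅ := by
      ext e
      refine Sym2.ind (fun a b => ?_) e
      simp only [Set.mem_empty_iff_false, iff_false, mem_edgeSet]
      intro hadj
      have : 1 < Fintype.card V := Fintype.one_lt_card_iff_nontrivial.mpr ⟨a, b, hadj.ne⟩
      omega
    rw [hcyc, hE0] at hc
    simp only [Set.ncard_empty, Nat.cast_zero, hn1] at hc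
    omega
  have hEn : (Fintype.card V : ℤ) + 1 ≤ (G.edgeSet.ncard : ℤ) := by
    rw [hcyc] at hc
    omega
  -- apply the matching lemma
  obtain ⟨M, hMm, hMle⟩ := mainMatch G.edgeSet.ncard G (le_refl _) hG hn2
  have hL0 : {v : V | (G.neighborSet v).ncard = 1} = ∅ := by
    ext v
    simp only [Set.mem_setOf_eq, Set.mem_empty_iff_false, iff_false]
    rw [deg_ncard G v]
    exact hpend v
  rw [hL0] at hMle
  simp only [Set.ncard_empty, Nat.cast_zero, zero_add] at hMle
  have hmax : max ((G.edgeSet.ncard : ℤ) - (Fintype.card V : ℤ)) 1 =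
      (G.edgeSet.ncard : ℤ) - (Fintype.card V : ℤ) := by
    rw [max_eq_left]
    omega
  rw [hmax] at hMle
  -- matchNum is at least the size of M
  have hbdd : BddAbove {n : ℕ | ∃ M : G.Subgraph, M.IsMatching ∧ M.edgeSet.ncard = n} := by
    refine ⟨G.edgeSet.ncard, ?_⟩
    rintro k ⟨M', _, rfl⟩
    exact Set.ncard_le_ncard M'.edgeSet_subset (Set.toFinite _)
  have hmn : M.edgeSet.ncard ≤ matchNum G := le_csSup hbdd ⟨M, hMm, rfl⟩
  have hrank : (H.rank : ℤ) ≤ (Fintype.card V : ℤ) := by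
    exact_mod_cast Int.ofNat_le.mpr (Matrix.rank_le_card_width H)
  have hmn' : (M.edgeSet.ncard : ℤ) ≤ (matchNum G : ℤ) := by exact_mod_cast hmn
  rw [hcyc]
  linarith
end
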